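/- arXiv:2501.10331 — 3 statements merged into one kernel-verified Lean document; each statement's English description precedes it below -/
import Mathlib

section
/- For every $\alpha \in [0,1)$ there exists a constant $C = C(\alpha) > 0$ such that for all $a, b : \mathbb{Z}^3 \to \mathbb{C}$ with $N_{1/2+\alpha}(a), N_{3/2+\alpha}(a), N_{1/2+\alpha}(b), N_{3/2+\alpha}(b)$ all finite, one has $N_{1/2+\alpha}(a*b) \le C \, N_{1/2+\alpha}(a)^{(1+\alpha)/2} \, N_{3/2+\alpha}(a)^{(1-\alpha)/2} \, N_{1/2+\alpha}(b)^{(1+\alpha)/2} \, N_{3/2+\alpha}(b)^{(1-\alpha)/2}$. -/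
open scoped ENNReal NNReal BigOperators

/-- The Sobolev-type weighted `ℓ²` norm `N_s(a) = (∑_{n ∈ ℤ³} (1+|n|²)^s ‖a(n)‖²)^{1/2}`,
valued in `ℝ≥0∞`. -/
noncomputable def Ns {E : Type*} [NormedAddCommGroup E] (s : ℝ) (a : (Fin 3 → ℤ) → E) : ℝ≥0∞ :=
  (∑' n : Fin 3 → ℤ,
    ENNReal.ofReal ((1 + ∑ i, ((n i : ℝ)) ^ 2) ^ s * ‖a n‖ ^ 2)) ^ (1 / 2 : ℝ)

/-- Convolution of two sequences on `ℤ³`. -/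
noncomputable def conv (a b : (Fin 3 → ℤ) → ℂ) (n : Fin 3 → ℤ) : ℂ :=
  ∑' m : Fin 3 → ℤ, a m * b (n - m)


open scoped BigOperators
open Finset

namespace NsAux

abbrev ι3 := Fin 3 → ℤ

noncomputable def qq (m : ι3) : ℝ := 1 + ∑ i, ((m i : ℝ)) ^ 2

lemma one_le_qq (m : ι3) : 1 ≤ qq m := by
  have : (0:ℝ) ≤ ∑ i, ((m i : ℝ)) ^ 2 := Finset.sum_nonneg fun i _ => sq_nonneg _
  simp only [qq]; linarith

lemma qq_pos (m : ι3) : 0 < qq m := lt_of_lt_of_le one_pos (one_le_qq m)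

noncomputable def box (N : ℕ) : Finset ι3 := Finset.Icc (fun _ => -(N:ℤ)) (fun _ => (N:ℤ))

lemma mem_box {m : ι3} {N : ℕ} : m ∈ box N ↔ ∀ i, |m i| ≤ (N:ℤ) := by
  simp only [box, Finset.mem_Icc, Pi.le_def, abs_le]
  constructor
  · rintro ⟨h1, h2⟩ i; exact ⟨h1 i, h2 i⟩
  · intro h; exact ⟨fun i => (h i).1, fun i => (h i).2⟩

lemma box_mono {M N : ℕ} (h : M ≤ N) : box M ⊆ box N := by
  intro m hm
  rw [mem_box] at hm ⊢
  intro i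
  exact le_trans (hm i) (by exact_mod_cast h)

lemma card_box (N : ℕ) : (box N).card = (2*N+1)^3 := by
  rw [box, Pi.card_Icc]
  have h1 : ∀ i : Fin 3, (Finset.Icc (-(N:ℤ)) (N:ℤ)).card = 2*N+1 := by
    intro i; rw [Int.card_Icc]; omega
  rw [Finset.prod_congr rfl (fun i _ => h1 i), Finset.prod_const, Finset.card_univ]
  simp

lemma qq_le_of_mem_box {m : ι3} {N : ℕ} (h : m ∈ box N) : qq m ≤ 1 + 3 * (N:ℝ)^2 := by
  rw [mem_box] at h
  have hs : ∑ i, ((m i : ℝ)) ^ 2 ≤ ∑ _i : Fin 3, (N:ℝ)^2 := by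
    apply Finset.sum_le_sum
    intro i _
    have h2 : |(m i : ℝ)| ≤ (N:ℝ) := by exact_mod_cast h i
    nlinarith [abs_nonneg (m i : ℝ), sq_abs (m i : ℝ)]
  simp only [Finset.sum_const, Finset.card_univ, Fintype.card_fin, nsmul_eq_mul] at hs
  simp only [qq]
  push_cast at hs ⊢
  linarith

lemma qq_ge_of_not_mem_box {m : ι3} {N : ℕ} (h : m ∉ box N) : 1 + ((N:ℝ)+1)^2 ≤ qq m := by
  rw [mem_box] at h
  push_neg at h
  obtain ⟨i, hi⟩ := h
  have h1 : (N:ℤ) + 1 ≤ |m i| := hi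
  have h2 : ((N:ℝ)+1)^2 ≤ ((m i : ℝ))^2 := by
    have : ((N:ℝ)+1) ≤ |(m i : ℝ)| := by exact_mod_cast h1
    nlinarith [abs_nonneg (m i : ℝ), sq_abs (m i : ℝ)]
  have h3 : ((m i:ℝ))^2 ≤ ∑ j, ((m j : ℝ))^2 :=
    Finset.single_le_sum (f := fun j => ((m j : ℝ))^2) (fun j _ => sq_nonneg _) (Finset.mem_univ i)
  simp only [qq]; linarith

/-- Shell counting bound. -/
lemma card_shell (N : ℕ) : ((box (N+1)) \ (box N)).card ≤ 98*(N+1)^2 := by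
  rw [Finset.card_sdiff_of_subset (box_mono (Nat.le_succ N)), card_box, card_box]
  have h : (2*(N+1)+1)^3 ≤ (2*N+1)^3 + 98*(N+1)^2 := by nlinarith [Nat.zero_le N]
  simp only [Nat.succ_eq_add_one]
  omega

/-- The main shell-decomposition bound. -/
lemma shell_sum (g : ι3 → ℝ) (f : ℕ → ℝ) (hg : ∀ m, 0 ≤ g m) (hf : ∀ r, 0 ≤ f r)
    (hshell : ∀ r : ℕ, ∀ m, m ∈ box (r+1) → m ∉ box r → g m ≤ f (r+1)) (L : ℕ) :
    ∀ N, ∑ m ∈ box N \ box L, g m ≤ ∑ r ∈ Finset.Icc (L+1) N, 98*(r:ℝ)^2 * f r := by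
  intro N
  induction N with
  | zero =>
    have : box 0 \ box L = ∅ := by
      rw [Finset.sdiff_eq_empty_iff_subset]; exact box_mono (Nat.zero_le L)
    rw [this]
    simp only [Finset.sum_empty]
    apply Finset.sum_nonneg
    intro r _; exact mul_nonneg (by positivity) (hf r)
  | succ N ih =>
    by_cases hL : N + 1 ≤ L
    · have : box (N+1) \ box L = ∅ := by
        rw [Finset.sdiff_eq_empty_iff_subset]; exact box_mono hL
      rw [this]
      simp only [Finset.sum_empty]
      apply Finset.sum_nonneg
      intro r _; exact mul_nonneg (by positivity) (hf r)
    · push_neg at hL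
      have hLN : L ≤ N := by omega
      -- split box (N+1) \ box L ⊆ (box N \ box L) ∪ (box (N+1) \ box N)
      have hsub : box (N+1) \ box L ⊆ (box N \ box L) ∪ (box (N+1) \ box N) := by
        intro m hm
        rw [Finset.mem_sdiff] at hm
        by_cases hmN : m ∈ box N
        · exact Finset.mem_union_left _ (Finset.mem_sdiff.2 ⟨hmN, hm.2⟩)
        · exact Finset.mem_union_right _ (Finset.mem_sdiff.2 ⟨hm.1, hmN⟩)
      have hdisj : Disjoint (box N \ box L) (box (N+1) \ box N) := by
        rw [Finset.disjoint_left]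
        intro m hm1 hm2
        exact (Finset.mem_sdiff.1 hm2).2 (Finset.mem_sdiff.1 hm1).1
      have hstep : ∑ m ∈ box (N+1) \ box L, g m ≤
          ∑ m ∈ box N \ box L, g m + ∑ m ∈ box (N+1) \ box N, g m := by
        calc ∑ m ∈ box (N+1) \ box L, g m
            ≤ ∑ m ∈ (box N \ box L) ∪ (box (N+1) \ box N), g m :=
              Finset.sum_le_sum_of_subset_of_nonneg hsub (fun m _ _ => hg m)
          _ = _ := Finset.sum_union hdisj
      have hshellsum : ∑ m ∈ box (N+1) \ box N, g m ≤ 98*((N:ℝ)+1)^2 * f (N+1) := by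
        calc ∑ m ∈ box (N+1) \ box N, g m
            ≤ ((box (N+1) \ box N).card : ℕ) • f (N+1) := by
              apply Finset.sum_le_card_nsmul
              intro m hm
              rw [Finset.mem_sdiff] at hm
              exact hshell N m hm.1 hm.2
          _ = ((box (N+1) \ box N).card : ℝ) * f (N+1) := by rw [nsmul_eq_mul]
          _ ≤ 98*((N:ℝ)+1)^2 * f (N+1) := by
              apply mul_le_mul_of_nonneg_right _ (hf (N+1))
              have := card_shell N
              have h2 : (((box (N+1)) \ (box N)).card : ℝ) ≤ ((98*(N+1)^2 : ℕ) : ℝ) := by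
                exact_mod_cast this
              calc (((box (N+1)) \ (box N)).card : ℝ) ≤ ((98*(N+1)^2 : ℕ) : ℝ) := h2
                _ = 98*((N:ℝ)+1)^2 := by push_cast; ring
      rw [Finset.sum_Icc_succ_top (by omega : L + 1 ≤ N + 1)]
      calc ∑ m ∈ box (N+1) \ box L, g m
          ≤ ∑ m ∈ box N \ box L, g m + ∑ m ∈ box (N+1) \ box N, g m := hstep
        _ ≤ (∑ r ∈ Finset.Icc (L+1) N, 98*(r:ℝ)^2 * f r) + 98*((N:ℝ)+1)^2 * f (N+1) :=
            add_le_add ih hshellsum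
        _ = _ := by push_cast; ring_nf


/-- Bernoulli-telescoping power sum bound: `∑_{r=1}^N r^(β-1) ≤ N^β/β` for `β ∈ (0,1]`. -/
lemma sum_rpow_le {β : ℝ} (hβ0 : 0 < β) (hβ1 : β ≤ 1) (N : ℕ) :
    ∑ r ∈ Finset.Icc 1 N, (r:ℝ)^(β-1) ≤ (N:ℝ)^β / β := by
  induction N with
  | zero =>
    simp [Real.zero_rpow hβ0.ne']
  | succ N ih =>
    rw [Finset.sum_Icc_succ_top (by omega : 1 ≤ N + 1)]
    have key : β * ((N:ℝ)+1)^(β-1) ≤ ((N:ℝ)+1)^β - (N:ℝ)^β := by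
      set x : ℝ := (N:ℝ) + 1 with hx
      have hx1 : (1:ℝ) ≤ x := by
        have : (0:ℝ) ≤ (N:ℝ) := Nat.cast_nonneg N
        simp only [hx]; linarith
      have hx0 : (0:ℝ) < x := lt_of_lt_of_le one_pos hx1
      have hs : (-1:ℝ) ≤ -1/x := by
        rw [neg_div]
        simp only [neg_le_neg_iff]
        rw [div_le_one hx0]
        exact hx1
      have hbern : (1 + (-1/x)) ^ β ≤ 1 + β * (-1/x) :=
        rpow_one_add_le_one_add_mul_self hs hβ0.le hβ1
      have hsplit : (N:ℝ) = x * (1 + (-1/x)) := by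
        field_simp [hx]
        linarith
      have h1 : (N:ℝ)^β = x^β * (1 + (-1/x))^β := by
        rw [hsplit, Real.mul_rpow hx0.le (by nlinarith)]
      have h2 : x^β * (1 + (-1/x))^β ≤ x^β * (1 + β * (-1/x)) := by
        apply mul_le_mul_of_nonneg_left hbern (Real.rpow_nonneg hx0.le β)
      have h3 : x^β * (1 + β * (-1/x)) = x^β - β * x^(β-1) := by
        rw [Real.rpow_sub_one hx0.ne']
        field_simp
        ring
      calc β * x^(β-1) = x^β - (x^β - β * x^(β-1)) := by ring
        _ ≤ x^β - (N:ℝ)^β := by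
            have : (N:ℝ)^β ≤ x^β - β * x^(β-1) := by
              rw [← h3]; exact h1.le.trans h2  -- h1 is eq
            linarith
    have hstep : ((N:ℝ)+1)^(β-1) ≤ (((N:ℝ)+1)^β - (N:ℝ)^β)/β := by
      rw [le_div_iff₀ hβ0]
      linarith [key]
    push_cast
    calc (∑ r ∈ Finset.Icc 1 N, (r:ℝ)^(β-1)) + ((N:ℝ)+1)^(β-1)
        ≤ (N:ℝ)^β / β + (((N:ℝ)+1)^β - (N:ℝ)^β)/β := add_le_add ih hstep
      _ = ((N:ℝ)+1)^β / β := by field_simp; ring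

/-- Tail bound `∑_{r=M0}^N r^{-2} ≤ 2/M0`. -/
lemma sum_inv_sq_le {M0 : ℕ} (hM0 : 1 ≤ M0) (N : ℕ) :
    ∑ r ∈ Finset.Icc M0 N, (r:ℝ)^(-2:ℝ) ≤ 2/(M0:ℝ) := by
  set h : ℕ → ℝ := fun r => 2/(2*(r:ℝ)-1) with hh
  have hM0R : (1:ℝ) ≤ (M0:ℝ) := by exact_mod_cast hM0
  have hterm : ∀ r : ℕ, 1 ≤ r → (r:ℝ)^(-2:ℝ) ≤ h r - h (r+1) := by
    intro r hr
    have hrR : (1:ℝ) ≤ (r:ℝ) := by exact_mod_cast hr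
    have h1 : (r:ℝ)^(-2:ℝ) = 1/(r:ℝ)^2 := by
      rw [Real.rpow_neg (by linarith), Real.rpow_two]
      rw [one_div]
    rw [h1, hh]
    push_cast
    rw [div_sub_div _ _ (by nlinarith) (by nlinarith), div_le_div_iff₀ (by nlinarith) (by nlinarith)]
    nlinarith
  have key : ∀ k : ℕ, ∑ r ∈ Finset.Icc M0 (M0+k), (r:ℝ)^(-2:ℝ) ≤ h M0 - h (M0+k+1) := by
    intro k
    induction k with
    | zero =>
      simp only [Nat.add_zero, Finset.Icc_self, Finset.sum_singleton]
      exact hterm M0 hM0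
    | succ k ih =>
      rw [show M0 + (k+1) = (M0+k) + 1 by ring, Finset.sum_Icc_succ_top (by omega : M0 ≤ M0+k+1)]
      have := hterm (M0+k+1) (by omega)
      push_cast at this ⊢
      push_cast at ih
      linarith
  by_cases hN : N < M0
  · rw [Finset.Icc_eq_empty (by omega)]
    simp
    positivity
  · push_neg at hN
    obtain ⟨k, rfl⟩ : ∃ k, N = M0 + k := ⟨N - M0, by omega⟩
    calc ∑ r ∈ Finset.Icc M0 (M0+k), (r:ℝ)^(-2:ℝ) ≤ h M0 - h (M0+k+1) := key k
      _ ≤ h M0 := by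
          have h0 : 0 ≤ h (M0+k+1) := by
            rw [hh]
            apply div_nonneg (by norm_num)
            push_cast
            linarith
          linarith
      _ = 2/(2*(M0:ℝ)-1) := rfl
      _ ≤ 2/(M0:ℝ) := by
          apply div_le_div_of_nonneg_left (by norm_num) (by linarith) (by linarith)

lemma rpow_neg_le_of_ge {x y e : ℝ} (hy : 0 < y) (hxy : y ≤ x) (he : e ≤ 0) :
    x ^ e ≤ y ^ e := Real.rpow_le_rpow_of_nonpos hy hxy he

lemma qq_rpow_nonneg (p : ℝ) (m : ι3) : 0 ≤ qq m ^ p := Real.rpow_nonneg (qq_pos m).le p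

/-- Region-1 sum bound: sum of `(qq m)^{-p}` over any finset where `qq m ≤ X`. -/
lemma P1 {p : ℝ} (hp1 : 1 ≤ p) (hp2 : p < 3/2) {X : ℝ} (hX : 1 ≤ X) (F : Finset ι3)
    (hF : ∀ m ∈ F, qq m ≤ X) :
    ∑ m ∈ F, (qq m)^(-p) ≤ (1 + 196/(3-2*p)) * X^(3/2-p) := by
  set β : ℝ := 3 - 2*p with hβ
  have hβ0 : 0 < β := by rw [hβ]; linarith
  have hβ1 : β ≤ 1 := by rw [hβ]; linarith
  have hX0 : (0:ℝ) < X := lt_of_lt_of_le one_pos hX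
  set N0 : ℕ := ⌈Real.sqrt X⌉₊ with hN0
  -- F ⊆ box N0
  have hFbox : F ⊆ box N0 := by
    intro m hm
    rw [mem_box]
    intro i
    have h1 : ((m i : ℝ))^2 ≤ X := by
      have := Finset.single_le_sum (f := fun j => ((m j : ℝ))^2)
        (fun j _ => sq_nonneg _) (Finset.mem_univ i)
      have h2 := hF m hm
      simp only [qq] at h2
      linarith
    have h2 : |(m i : ℝ)| ≤ Real.sqrt X := by
      rw [← Real.sqrt_sq_eq_abs]
      exact Real.sqrt_le_sqrt h1
    have h3 : |(m i : ℝ)| ≤ (N0:ℝ) := h2.trans (Nat.le_ceil _)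
    exact_mod_cast h3
  have hnonneg : ∀ m, 0 ≤ (qq m)^(-p) := fun m => qq_rpow_nonneg _ m
  have step1 : ∑ m ∈ F, (qq m)^(-p) ≤ ∑ m ∈ box N0, (qq m)^(-p) :=
    Finset.sum_le_sum_of_subset_of_nonneg hFbox (fun m _ _ => hnonneg m)
  -- split off box 0
  have hsplit : ∑ m ∈ box N0, (qq m)^(-p)
      = ∑ m ∈ box N0 \ box 0, (qq m)^(-p) + ∑ m ∈ box 0, (qq m)^(-p) :=
    (Finset.sum_sdiff (box_mono (Nat.zero_le N0))).symm
  have hbox0 : ∑ m ∈ box 0, (qq m)^(-p) ≤ 1 := by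
    have hcard : (box 0).card = 1 := by rw [card_box]; norm_num
    have : ∀ m ∈ box 0, (qq m)^(-p) ≤ 1 := by
      intro m _
      exact Real.rpow_le_one_of_one_le_of_nonpos (one_le_qq m) (by linarith)
    calc ∑ m ∈ box 0, (qq m)^(-p) ≤ (box 0).card • (1:ℝ) := Finset.sum_le_card_nsmul _ _ _ this
      _ = 1 := by rw [hcard]; simp
  -- shell bound
  have hshell : ∀ r : ℕ, ∀ m, m ∈ box (r+1) → m ∉ box r → (qq m)^(-p) ≤ ((r+1:ℕ):ℝ)^(-(2*p)) := by
    intro r m _ hm2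
    have h1 : 1 + ((r:ℝ)+1)^2 ≤ qq m := qq_ge_of_not_mem_box hm2
    have h2 : (((r+1:ℕ):ℝ))^2 ≤ qq m := by push_cast; nlinarith
    have h3 : (0:ℝ) < (((r+1:ℕ):ℝ))^2 := by positivity
    calc (qq m)^(-p) ≤ ((((r+1:ℕ):ℝ))^2)^(-p) := rpow_neg_le_of_ge h3 h2 (by linarith)
      _ = ((r+1:ℕ):ℝ)^(-(2*p)) := by
          rw [← Real.rpow_natCast (((r+1:ℕ):ℝ)) 2, ← Real.rpow_mul (by positivity)]
          norm_num
  have step2 : ∑ m ∈ box N0 \ box 0, (qq m)^(-p)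
      ≤ ∑ r ∈ Finset.Icc 1 N0, 98*(r:ℝ)^2 * ((r:ℝ)^(-(2*p))) := by
    have := shell_sum (fun m => (qq m)^(-p)) (fun r => (r:ℝ)^(-(2*p)))
      hnonneg (fun r => Real.rpow_nonneg (Nat.cast_nonneg r) _)
      (by intro r m h1 h2; exact_mod_cast hshell r m h1 h2) 0 N0
    simpa using this
  have step3 : ∑ r ∈ Finset.Icc 1 N0, 98*(r:ℝ)^2 * ((r:ℝ)^(-(2*p)))
      ≤ 98 * ((N0:ℝ)^β / β) := by
    have hre : ∀ r ∈ Finset.Icc 1 N0, 98*(r:ℝ)^2 * ((r:ℝ)^(-(2*p))) = 98 * (r:ℝ)^(β-1) := by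
      intro r hr
      have hr1 : 1 ≤ r := (Finset.mem_Icc.1 hr).1
      have hrR : (0:ℝ) < (r:ℝ) := by exact_mod_cast hr1
      rw [mul_assoc, ← Real.rpow_natCast ((r:ℝ)) 2, ← Real.rpow_add hrR]
      rw [show ((2:ℕ):ℝ) + -(2*p) = β - 1 by rw [hβ]; push_cast; ring]
    rw [Finset.sum_congr rfl hre, ← Finset.mul_sum]
    exact mul_le_mul_of_nonneg_left (sum_rpow_le hβ0 hβ1 N0) (by norm_num)
  -- N0 ≤ 2√X
  have hsqrt1 : (1:ℝ) ≤ Real.sqrt X := by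
    rw [show (1:ℝ) = Real.sqrt 1 by simp]
    exact Real.sqrt_le_sqrt hX
  have hN0le : (N0:ℝ) ≤ 2 * Real.sqrt X := by
    have := Nat.ceil_lt_add_one (Real.sqrt_nonneg X)
    have h5 : (N0:ℝ) < Real.sqrt X + 1 := by exact_mod_cast this
    linarith
  have hN0pow : (N0:ℝ)^β ≤ 2 * X^(3/2-p) := by
    have h1 : (N0:ℝ)^β ≤ (2*Real.sqrt X)^β :=
      Real.rpow_le_rpow (Nat.cast_nonneg N0) hN0le hβ0.le
    have h2 : (2*Real.sqrt X)^β = 2^β * (Real.sqrt X)^β :=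
      Real.mul_rpow (by norm_num) (Real.sqrt_nonneg X)
    have h3 : (2:ℝ)^β ≤ 2 := by
      calc (2:ℝ)^β ≤ (2:ℝ)^(1:ℝ) := Real.rpow_le_rpow_of_exponent_le (by norm_num) hβ1
        _ = 2 := Real.rpow_one 2
    have h4 : (Real.sqrt X)^β = X^(3/2-p) := by
      rw [Real.sqrt_eq_rpow, ← Real.rpow_mul hX0.le]
      congr 1
      rw [hβ]; ring
    calc (N0:ℝ)^β ≤ 2^β * (Real.sqrt X)^β := by rw [← h2]; exact h1
      _ ≤ 2 * X^(3/2-p) := by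
          rw [h4]
          apply mul_le_mul_of_nonneg_right h3 (Real.rpow_nonneg hX0.le _)
  have hone : (1:ℝ) ≤ X^(3/2-p) := Real.one_le_rpow hX (by linarith)
  calc ∑ m ∈ F, (qq m)^(-p) ≤ ∑ m ∈ box N0, (qq m)^(-p) := step1
    _ = ∑ m ∈ box N0 \ box 0, (qq m)^(-p) + ∑ m ∈ box 0, (qq m)^(-p) := hsplit
    _ ≤ 98 * ((N0:ℝ)^β / β) + 1 := add_le_add (step2.trans step3) hbox0
    _ ≤ 98 * ((2 * X^(3/2-p)) / β) + X^(3/2-p) := by gcongr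
    _ = (1 + 196/(3-2*p)) * X^(3/2-p) := by rw [← hβ]; field_simp; ring

/-- Region-3 (tail) sum bound: sum of `(qq m)^{-t}` over any finset where `X < qq m`. -/
lemma P2 {t : ℝ} (ht1 : 2 ≤ t) (ht2 : t ≤ 3) {X : ℝ} (hX : 1 ≤ X) (F : Finset ι3)
    (hF : ∀ m ∈ F, X < qq m) :
    ∑ m ∈ F, (qq m)^(-t) ≤ 1568 * X^(3/2-t) := by
  have hX0 : (0:ℝ) < X := lt_of_lt_of_le one_pos hX
  have hsX : (0:ℝ) < Real.sqrt X := Real.sqrt_pos.2 hX0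
  set M0 : ℕ := ⌈Real.sqrt X / 2⌉₊ with hM0def
  have hM0 : 1 ≤ M0 := Nat.ceil_pos.2 (by positivity)
  have hM0ge : Real.sqrt X / 2 ≤ (M0:ℝ) := Nat.le_ceil _
  have hM0R : (1:ℝ) ≤ (M0:ℝ) := by exact_mod_cast hM0
  -- every member of F is outside box (M0 - 1)
  have hout : ∀ m ∈ F, m ∉ box (M0 - 1) := by
    intro m hm
    set K : ℕ := Finset.univ.sup (fun i => (m i).natAbs) with hKdef
    have hmK : m ∈ box K := by
      rw [mem_box]
      intro i
      have h0 : (m i).natAbs ≤ K := Finset.le_sup (f := fun i => (m i).natAbs) (Finset.mem_univ i)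
      rw [Int.abs_eq_natAbs]
      exact_mod_cast h0
    have hqK : qq m ≤ 1 + 3 * (K:ℝ)^2 := qq_le_of_mem_box hmK
    have hXq := hF m hm
    have hK1 : 1 ≤ K := by
      by_contra h
      push_neg at h
      interval_cases K
      · have : qq m ≤ 1 := by norm_num at hqK; linarith
        linarith
    have hKR : (1:ℝ) ≤ (K:ℝ) := by exact_mod_cast hK1
    have h4K : X < (2*(K:ℝ))^2 := by nlinarith
    have hsq : Real.sqrt X < 2*(K:ℝ) := by
      have := Real.sqrt_lt_sqrt hX0.le h4K
      rwa [Real.sqrt_sq (by linarith)] at this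
    have hKM0 : M0 ≤ K := Nat.ceil_le.2 (by linarith)
    intro hmem
    rw [mem_box] at hmem
    have : K ≤ M0 - 1 := by
      rw [hKdef]
      apply Finset.sup_le
      intro i _
      have h7 : ((m i).natAbs : ℤ) ≤ ((M0-1:ℕ):ℤ) := by
        rw [← Int.abs_eq_natAbs]
        exact hmem i
      exact_mod_cast h7
    omega
  -- F inside a big box minus box (M0-1)
  obtain ⟨N, hNM0, hNbound⟩ : ∃ N : ℕ, M0 ≤ N ∧ ∀ m ∈ F, ∀ i, (m i).natAbs ≤ N := by
    refine ⟨max M0 (F.sup (fun m => Finset.univ.sup (fun i => (m i).natAbs))),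
      le_max_left _ _, ?_⟩
    intro m hm i
    have h1 : (m i).natAbs ≤ Finset.univ.sup (fun i => (m i).natAbs) :=
      Finset.le_sup (f := fun i => (m i).natAbs) (Finset.mem_univ i)
    have h2 : Finset.univ.sup (fun i => (m i).natAbs) ≤
        F.sup (fun m => Finset.univ.sup (fun i => (m i).natAbs)) :=
      Finset.le_sup (f := fun m => Finset.univ.sup (fun i => (m i).natAbs)) hm
    exact le_trans (le_trans h1 h2) (le_max_right _ _)
  have hFsub : F ⊆ box N \ box (M0 - 1) := by
    intro m hm
    rw [Finset.mem_sdiff]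
    refine ⟨?_, hout m hm⟩
    rw [mem_box]
    intro i
    rw [Int.abs_eq_natAbs]
    exact_mod_cast hNbound m hm i
  have hnonneg : ∀ m, 0 ≤ (qq m)^(-t) := fun m => qq_rpow_nonneg _ m
  have step1 : ∑ m ∈ F, (qq m)^(-t) ≤ ∑ m ∈ box N \ box (M0-1), (qq m)^(-t) :=
    Finset.sum_le_sum_of_subset_of_nonneg hFsub (fun m _ _ => hnonneg m)
  have hshell : ∀ r : ℕ, ∀ m, m ∈ box (r+1) → m ∉ box r → (qq m)^(-t) ≤ ((r+1:ℕ):ℝ)^(-(2*t)) := by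
    intro r m _ hm2
    have h1 : 1 + ((r:ℝ)+1)^2 ≤ qq m := qq_ge_of_not_mem_box hm2
    have h2 : (((r+1:ℕ):ℝ))^2 ≤ qq m := by push_cast; nlinarith
    have h3 : (0:ℝ) < (((r+1:ℕ):ℝ))^2 := by positivity
    calc (qq m)^(-t) ≤ ((((r+1:ℕ):ℝ))^2)^(-t) := rpow_neg_le_of_ge h3 h2 (by linarith)
      _ = ((r+1:ℕ):ℝ)^(-(2*t)) := by
          rw [← Real.rpow_natCast (((r+1:ℕ):ℝ)) 2, ← Real.rpow_mul (by positivity)]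
          norm_num
  have step2 : ∑ m ∈ box N \ box (M0-1), (qq m)^(-t)
      ≤ ∑ r ∈ Finset.Icc M0 N, 98*(r:ℝ)^2 * ((r:ℝ)^(-(2*t))) := by
    have := shell_sum (fun m => (qq m)^(-t)) (fun r => (r:ℝ)^(-(2*t)))
      hnonneg (fun r => Real.rpow_nonneg (Nat.cast_nonneg r) _)
      (by intro r m h1 h2; exact_mod_cast hshell r m h1 h2) (M0-1) N
    rw [show M0 - 1 + 1 = M0 by omega] at this
    exact this
  have step3 : ∑ r ∈ Finset.Icc M0 N, 98*(r:ℝ)^2 * ((r:ℝ)^(-(2*t)))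
      ≤ 98 * (M0:ℝ)^(4-2*t) * (2/(M0:ℝ)) := by
    have hterm : ∀ r ∈ Finset.Icc M0 N, 98*(r:ℝ)^2 * ((r:ℝ)^(-(2*t)))
        ≤ 98 * (M0:ℝ)^(4-2*t) * ((r:ℝ)^(-2:ℝ)) := by
      intro r hr
      have hr1 : M0 ≤ r := (Finset.mem_Icc.1 hr).1
      have hrR : (1:ℝ) ≤ (r:ℝ) := by
        have : 1 ≤ r := le_trans hM0 hr1
        exact_mod_cast this
      have hr0 : (0:ℝ) < (r:ℝ) := by linarith
      have hrM : (M0:ℝ) ≤ (r:ℝ) := by exact_mod_cast hr1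
      have he1 : (r:ℝ)^2 * ((r:ℝ)^(-(2*t))) = (r:ℝ)^(4-2*t) * ((r:ℝ)^(-2:ℝ)) := by
        rw [← Real.rpow_natCast ((r:ℝ)) 2, ← Real.rpow_add hr0, ← Real.rpow_add hr0]
        congr 1
        push_cast
        ring
      have he2 : (r:ℝ)^(4-2*t) ≤ (M0:ℝ)^(4-2*t) :=
        rpow_neg_le_of_ge (by linarith) hrM (by linarith)
      calc 98*(r:ℝ)^2 * ((r:ℝ)^(-(2*t))) = 98 * ((r:ℝ)^(4-2*t) * ((r:ℝ)^(-2:ℝ))) := by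
            rw [mul_assoc, he1]
        _ ≤ 98 * ((M0:ℝ)^(4-2*t) * ((r:ℝ)^(-2:ℝ))) := by
            apply mul_le_mul_of_nonneg_left _ (by norm_num)
            exact mul_le_mul_of_nonneg_right he2 (Real.rpow_nonneg hr0.le _)
        _ = 98 * (M0:ℝ)^(4-2*t) * ((r:ℝ)^(-2:ℝ)) := by ring
    calc ∑ r ∈ Finset.Icc M0 N, 98*(r:ℝ)^2 * ((r:ℝ)^(-(2*t)))
        ≤ ∑ r ∈ Finset.Icc M0 N, 98 * (M0:ℝ)^(4-2*t) * ((r:ℝ)^(-2:ℝ)) :=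
          Finset.sum_le_sum hterm
      _ = 98 * (M0:ℝ)^(4-2*t) * ∑ r ∈ Finset.Icc M0 N, ((r:ℝ)^(-2:ℝ)) := by
          rw [Finset.mul_sum]
      _ ≤ 98 * (M0:ℝ)^(4-2*t) * (2/(M0:ℝ)) := by
          apply mul_le_mul_of_nonneg_left (sum_inv_sq_le hM0 N)
          exact mul_nonneg (by norm_num) (Real.rpow_nonneg (by linarith) _)
  have step4 : 98 * (M0:ℝ)^(4-2*t) * (2/(M0:ℝ)) = 196 * (M0:ℝ)^(3-2*t) := by
    have hM00 : (0:ℝ) < (M0:ℝ) := by linarith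
    have : (M0:ℝ)^(4-2*t) = (M0:ℝ)^(3-2*t) * (M0:ℝ) := by
      rw [show (4:ℝ)-2*t = (3-2*t)+1 by ring, Real.rpow_add hM00, Real.rpow_one]
    rw [this]
    field_simp
    ring
  have step5 : (M0:ℝ)^(3-2*t) ≤ 8 * X^(3/2-t) := by
    have h1 : (M0:ℝ)^(3-2*t) ≤ (Real.sqrt X / 2)^(3-2*t) :=
      rpow_neg_le_of_ge (by positivity) hM0ge (by linarith)
    have h2 : (Real.sqrt X / 2)^(3-2*t) = (Real.sqrt X)^(3-2*t) / 2^(3-2*t) :=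
      Real.div_rpow (Real.sqrt_nonneg X) (by norm_num : (0:ℝ) ≤ 2) _
    have h3 : (Real.sqrt X)^(3-2*t) = X^(3/2-t) := by
      rw [Real.sqrt_eq_rpow, ← Real.rpow_mul hX0.le]
      congr 1
      ring
    have h4 : (1:ℝ)/8 ≤ (2:ℝ)^(3-2*t) := by
      have : ((2:ℝ))^(-3:ℝ) ≤ (2:ℝ)^(3-2*t) :=
        Real.rpow_le_rpow_of_exponent_le (by norm_num) (by linarith)
      calc (1:ℝ)/8 = (2:ℝ)^(-3:ℝ) := by
            rw [Real.rpow_neg (by norm_num)]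
            norm_num
        _ ≤ (2:ℝ)^(3-2*t) := this
    have h5 : (0:ℝ) < (2:ℝ)^(3-2*t) := Real.rpow_pos_of_pos (by norm_num) _
    have h6 : (Real.sqrt X)^(3-2*t) / 2^(3-2*t) ≤ X^(3/2-t) / (1/8) := by
      rw [h3]
      apply div_le_div_of_nonneg_left (Real.rpow_nonneg hX0.le _) ?_ h4
      · norm_num
    calc (M0:ℝ)^(3-2*t) ≤ (Real.sqrt X)^(3-2*t) / 2^(3-2*t) := h1.trans_eq h2
      _ ≤ X^(3/2-t) / (1/8) := h6
      _ = 8 * X^(3/2-t) := by ring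
  calc ∑ m ∈ F, (qq m)^(-t) ≤ ∑ r ∈ Finset.Icc M0 N, 98*(r:ℝ)^2 * ((r:ℝ)^(-(2*t))) :=
        step1.trans step2
    _ ≤ 196 * (M0:ℝ)^(3-2*t) := step3.trans_eq step4
    _ ≤ 196 * (8 * X^(3/2-t)) := mul_le_mul_of_nonneg_left step5 (by norm_num)
    _ = 1568 * X^(3/2-t) := by ring

lemma quarter {n m : ι3} (h : qq m ≤ qq (n - m)) : qq n ≤ 4 * qq (n - m) := by
  have hcoord : ∀ i : Fin 3, ((n i : ℝ))^2 ≤ 2*((m i:ℝ))^2 + 2*(((n-m) i : ℝ))^2 := by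
    intro i
    have : ((n - m) i : ℝ) = (n i : ℝ) - (m i : ℝ) := by
      simp [Pi.sub_apply]
    rw [this]
    nlinarith [sq_nonneg ((n i : ℝ) - 2*(m i:ℝ))]
  have hsum : ∑ i, ((n i:ℝ))^2 ≤ ∑ i, (2*((m i:ℝ))^2 + 2*(((n-m) i : ℝ))^2) :=
    Finset.sum_le_sum (fun i _ => hcoord i)
  rw [Finset.sum_add_distrib, ← Finset.mul_sum, ← Finset.mul_sum] at hsum
  simp only [qq] at h ⊢
  linarith

lemma prod_le_sum_rpow {x y t : ℝ} (hx : 0 < x) (hy : 0 < y) (ht : 0 ≤ t) :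
    x^(-t) * y^(-t) ≤ x^(-(2*t)) + y^(-(2*t)) := by
  rcases le_total x y with h | h
  · have h1 : y^(-t) ≤ x^(-t) := rpow_neg_le_of_ge hx h (by linarith)
    have h2 : x^(-t) * y^(-t) ≤ x^(-t) * x^(-t) :=
      mul_le_mul_of_nonneg_left h1 (Real.rpow_nonneg hx.le _)
    have h3 : x^(-t) * x^(-t) = x^(-(2*t)) := by
      rw [← Real.rpow_add hx]; congr 1; ring
    calc x^(-t) * y^(-t) ≤ x^(-(2*t)) := by rw [← h3]; exact h2
      _ ≤ x^(-(2*t)) + y^(-(2*t)) := by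
          have := Real.rpow_nonneg hy.le (-(2*t)); linarith
  · have h1 : x^(-t) ≤ y^(-t) := rpow_neg_le_of_ge hy h (by linarith)
    have h2 : x^(-t) * y^(-t) ≤ y^(-t) * y^(-t) :=
      mul_le_mul_of_nonneg_right h1 (Real.rpow_nonneg hy.le _)
    have h3 : y^(-t) * y^(-t) = y^(-(2*t)) := by
      rw [← Real.rpow_add hy]; congr 1; ring
    calc x^(-t) * y^(-t) ≤ y^(-(2*t)) := by rw [← h3]; exact h2
      _ ≤ x^(-(2*t)) + y^(-(2*t)) := by
          have := Real.rpow_nonneg hx.le (-(2*t)); linarith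

/-- Region-1 type bound. -/
lemma region1 {p s : ℝ} (hp1 : 1 ≤ p) (hp2 : p < 3/2) (hs : s = 2*p - 3/2) (n : ι3)
    (G : Finset ι3) (hG : ∀ m ∈ G, qq m ≤ qq (n - m) ∧ qq m ≤ qq n) :
    ∑ m ∈ G, (qq m)^(-p) * (qq (n-m))^(-p)
      ≤ 4^p * (1 + 196/(3-2*p)) * (qq n)^(-s) := by
  have hqn := qq_pos n
  have hterm : ∀ m ∈ G, (qq m)^(-p) * (qq (n-m))^(-p)
      ≤ (4^p * (qq n)^(-p)) * (qq m)^(-p) := by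
    intro m hm
    have hq : qq n ≤ 4 * qq (n - m) := quarter (hG m hm).1
    have hq4 : qq n / 4 ≤ qq (n - m) := by linarith
    have h1 : (qq (n-m))^(-p) ≤ (qq n / 4)^(-p) :=
      rpow_neg_le_of_ge (by linarith) hq4 (by linarith)
    have h2 : (qq n / 4)^(-p) = 4^p * (qq n)^(-p) := by
      rw [Real.div_rpow hqn.le (by norm_num : (0:ℝ) ≤ 4), Real.rpow_neg hqn.le,
        Real.rpow_neg (by norm_num : (0:ℝ) ≤ 4)]
      field_simp
    calc (qq m)^(-p) * (qq (n-m))^(-p) ≤ (qq m)^(-p) * (4^p * (qq n)^(-p)) := by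
          apply mul_le_mul_of_nonneg_left (h1.trans_eq h2) (qq_rpow_nonneg _ m)
      _ = (4^p * (qq n)^(-p)) * (qq m)^(-p) := by ring
  calc ∑ m ∈ G, (qq m)^(-p) * (qq (n-m))^(-p)
      ≤ ∑ m ∈ G, (4^p * (qq n)^(-p)) * (qq m)^(-p) := Finset.sum_le_sum hterm
    _ = (4^p * (qq n)^(-p)) * ∑ m ∈ G, (qq m)^(-p) := by rw [Finset.mul_sum]
    _ ≤ (4^p * (qq n)^(-p)) * ((1 + 196/(3-2*p)) * (qq n)^(3/2-p)) := by
        apply mul_le_mul_of_nonneg_left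
          (P1 hp1 hp2 (one_le_qq n) G (fun m hm => (hG m hm).2))
        exact mul_nonneg (Real.rpow_nonneg (by norm_num) _) (qq_rpow_nonneg _ n)
    _ = 4^p * (1 + 196/(3-2*p)) * ((qq n)^(-p) * (qq n)^(3/2-p)) := by ring
    _ = 4^p * (1 + 196/(3-2*p)) * (qq n)^(-s) := by
        rw [← Real.rpow_add hqn]
        congr 2
        rw [hs]; ring

/-- Reflecting a sum in `m ↦ n - m`. -/
lemma sum_reflect (n : ι3) (G : Finset ι3) (f : ι3 → ι3 → ℝ) :
    ∑ m ∈ G, f m (n - m) = ∑ k ∈ G.image (fun m => n - m), f (n - k) k := by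
  rw [Finset.sum_image (fun a _ b _ h => sub_right_injective h)]
  apply Finset.sum_congr rfl
  intro m _
  rw [sub_sub_cancel]

/-- The key convolution-kernel estimate. -/
lemma key_finset (α : ℝ) (hα0 : 0 ≤ α) (hα1 : α < 1) (n : ι3) (F : Finset ι3) :
    ∑ m ∈ F, (qq m)^(-(1+α/2)) * (qq (n-m))^(-(1+α/2))
      ≤ (2 * 4^(1+α/2) * (1 + 196/(1-α)) + 3136) * (qq n)^(-(1/2+α)) := by
  classical
  have hqn := qq_pos n
  set p : ℝ := 1 + α/2 with hp
  set s : ℝ := 1/2 + α with hs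
  have hp1 : 1 ≤ p := by rw [hp]; linarith
  have hp2 : p < 3/2 := by rw [hp]; linarith
  have hsp : s = 2*p - 3/2 := by rw [hs, hp]; ring
  have hnonneg : ∀ m, 0 ≤ (qq m)^(-p) * (qq (n-m))^(-p) :=
    fun m => mul_nonneg (qq_rpow_nonneg _ m) (qq_rpow_nonneg _ _)
  set T : ι3 → ℝ := fun m => (qq m)^(-p) * (qq (n-m))^(-p) with hT
  set Pr1 : ι3 → Prop := fun m => qq m ≤ qq (n-m) ∧ qq m ≤ qq n with hPr1
  set Pr2 : ι3 → Prop := fun m => qq (n-m) ≤ qq n with hPr2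
  have hsplit1 : ∑ m ∈ F, T m
      = ∑ m ∈ F.filter Pr1, T m + ∑ m ∈ F.filter (fun m => ¬ Pr1 m), T m :=
    (Finset.sum_filter_add_sum_filter_not F Pr1 T).symm
  set F1c : Finset ι3 := F.filter (fun m => ¬ Pr1 m) with hF1c
  have hsplit2 : ∑ m ∈ F1c, T m
      = ∑ m ∈ F1c.filter Pr2, T m + ∑ m ∈ F1c.filter (fun m => ¬ Pr2 m), T m :=
    (Finset.sum_filter_add_sum_filter_not F1c Pr2 T).symm
  -- region 1
  have hreg1 : ∑ m ∈ F.filter Pr1, T m ≤ 4^p * (1 + 196/(3-2*p)) * (qq n)^(-s) := by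
    apply region1 hp1 hp2 hsp n
    intro m hm
    exact (Finset.mem_filter.1 hm).2
  -- region 2 (reflected region 1)
  have hreg2 : ∑ m ∈ F1c.filter Pr2, T m ≤ 4^p * (1 + 196/(3-2*p)) * (qq n)^(-s) := by
    have hmem : ∀ m ∈ F1c.filter Pr2, qq (n-m) ≤ qq m ∧ qq (n-m) ≤ qq n := by
      intro m hm
      rw [Finset.mem_filter] at hm
      have h2 : qq (n-m) ≤ qq n := hm.2
      have h1 : ¬ Pr1 m := (Finset.mem_filter.1 hm.1).2
      simp only [hPr1, not_and, not_le] at h1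
      constructor
      · by_cases hc : qq m ≤ qq (n-m)
        · have := h1 hc
          linarith
        · push_neg at hc; linarith
      · exact h2
    have hrefl := sum_reflect n (F1c.filter Pr2)
      (fun x y => (qq x)^(-p) * (qq y)^(-p))
    calc ∑ m ∈ F1c.filter Pr2, T m
        = ∑ k ∈ (F1c.filter Pr2).image (fun m => n - m),
            (qq (n-k))^(-p) * (qq k)^(-p) := hrefl
      _ = ∑ k ∈ (F1c.filter Pr2).image (fun m => n - m),
            (qq k)^(-p) * (qq (n-k))^(-p) := by
          apply Finset.sum_congr rfl; intro k _; ring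
      _ ≤ 4^p * (1 + 196/(3-2*p)) * (qq n)^(-s) := by
          apply region1 hp1 hp2 hsp n
          intro k hk
          rw [Finset.mem_image] at hk
          obtain ⟨m, hm, rfl⟩ := hk
          have := hmem m hm
          rw [sub_sub_cancel]
          exact this
  -- region 3
  have hreg3 : ∑ m ∈ F1c.filter (fun m => ¬ Pr2 m), T m ≤ 3136 * (qq n)^(-s) := by
    set F3 : Finset ι3 := F1c.filter (fun m => ¬ Pr2 m) with hF3
    have hmem : ∀ m ∈ F3, qq n < qq m ∧ qq n < qq (n-m) := by
      intro m hm
      rw [hF3, Finset.mem_filter] at hm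
      have h2 : qq n < qq (n-m) := by
        have := hm.2; simp only [hPr2, not_le] at this; exact this
      have h1 : ¬ Pr1 m := (Finset.mem_filter.1 hm.1).2
      simp only [hPr1, not_and, not_le] at h1
      refine ⟨?_, h2⟩
      by_cases hc : qq m ≤ qq (n-m)
      · exact h1 hc
      · push_neg at hc; linarith
    have ht1 : 2 ≤ 2*p := by rw [hp]; linarith
    have ht2 : 2*p ≤ 3 := by rw [hp]; linarith
    have hterm : ∀ m ∈ F3, T m ≤ (qq m)^(-(2*p)) + (qq (n-m))^(-(2*p)) := by
      intro m _
      exact prod_le_sum_rpow (qq_pos m) (qq_pos (n-m)) (by linarith)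
    have hexp : (3:ℝ)/2 - 2*p = -s := by rw [hsp]; ring
    have hA : ∑ m ∈ F3, (qq m)^(-(2*p)) ≤ 1568 * (qq n)^(-s) := by
      have := P2 ht1 ht2 (one_le_qq n) F3 (fun m hm => (hmem m hm).1)
      rwa [hexp] at this
    have hB : ∑ m ∈ F3, (qq (n-m))^(-(2*p)) ≤ 1568 * (qq n)^(-s) := by
      have hrefl := sum_reflect n F3 (fun x y => (qq y)^(-(2*p)))
      rw [hrefl]
      have := P2 ht1 ht2 (one_le_qq n) (F3.image (fun m => n - m)) ?_
      · rwa [hexp] at this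
      · intro k hk
        rw [Finset.mem_image] at hk
        obtain ⟨m, hm, rfl⟩ := hk
        exact (hmem m hm).2
    calc ∑ m ∈ F3, T m ≤ ∑ m ∈ F3, ((qq m)^(-(2*p)) + (qq (n-m))^(-(2*p))) :=
          Finset.sum_le_sum hterm
      _ = ∑ m ∈ F3, (qq m)^(-(2*p)) + ∑ m ∈ F3, (qq (n-m))^(-(2*p)) :=
          Finset.sum_add_distrib
      _ ≤ 1568 * (qq n)^(-s) + 1568 * (qq n)^(-s) := add_le_add hA hB
      _ = 3136 * (qq n)^(-s) := by ring
  have h32 : (3:ℝ) - 2*p = 1 - α := by rw [hp]; ring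
  calc ∑ m ∈ F, T m
      = ∑ m ∈ F.filter Pr1, T m + (∑ m ∈ F1c.filter Pr2, T m
          + ∑ m ∈ F1c.filter (fun m => ¬ Pr2 m), T m) := by rw [hsplit1, hsplit2]
    _ ≤ 4^p * (1 + 196/(3-2*p)) * (qq n)^(-s)
        + (4^p * (1 + 196/(3-2*p)) * (qq n)^(-s) + 3136 * (qq n)^(-s)) :=
          add_le_add hreg1 (add_le_add hreg2 hreg3)
    _ = (2 * 4^p * (1 + 196/(3-2*p)) + 3136) * (qq n)^(-s) := by ring
    _ = (2 * 4^(1+α/2) * (1 + 196/(1-α)) + 3136) * (qq n)^(-(1/2+α)) := by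
        rw [h32, ← hp, ← hs]

/-! ### ENNReal machinery -/

open MeasureTheory
open scoped ENNReal NNReal

noncomputable def W (m : ι3) : ℝ≥0∞ := ENNReal.ofReal (qq m)

lemma W_ne_zero (m : ι3) : W m ≠ 0 := by
  simp only [W, ne_eq, ENNReal.ofReal_eq_zero, not_le]
  exact qq_pos m

lemma W_ne_top (m : ι3) : W m ≠ ⊤ := ENNReal.ofReal_ne_top

lemma W_rpow (m : ι3) (e : ℝ) : W m ^ e = ENNReal.ofReal ((qq m) ^ e) :=
  ENNReal.ofReal_rpow_of_pos (qq_pos m)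

lemma ofReal_norm_eq_coe_nnnorm {E : Type*} [NormedAddCommGroup E] (x : E) :
    ENNReal.ofReal ‖x‖ = (‖x‖₊ : ℝ≥0∞) :=
  ENNReal.ofReal_eq_coe_nnreal _

/-- Cauchy–Schwarz for `tsum` in `ℝ≥0∞`. -/
lemma tsum_cs (f g : ι3 → ℝ≥0∞) :
    ∑' m, f m * g m ≤ (∑' m, f m ^ (2:ℝ))^(1/2:ℝ) * (∑' m, g m ^ (2:ℝ))^(1/2:ℝ) := by
  have hpq : Real.HolderConjugate 2 2 := Real.holderConjugate_iff.2 ⟨by norm_num, by norm_num⟩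
  have h := ENNReal.lintegral_mul_le_Lp_mul_Lq (Measure.count : Measure ι3) hpq
    (Measurable.of_discrete (f := f)).aemeasurable
    (Measurable.of_discrete (f := g)).aemeasurable
  simp only [lintegral_count, Pi.mul_apply] at h
  exact h

/-- Hölder for `tsum` in `ℝ≥0∞`. -/
lemma tsum_holder {θ : ℝ} (hθ0 : 0 < θ) (hθ1 : θ < 1) (x y : ι3 → ℝ≥0∞) :
    ∑' m, (x m)^θ * (y m)^(1-θ) ≤ (∑' m, x m)^θ * (∑' m, y m)^(1-θ) := by
  have hpq : Real.HolderConjugate (1/θ) (1/(1-θ)) := by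
    rw [Real.holderConjugate_iff]
    constructor
    · rw [lt_div_iff₀ hθ0]; linarith
    · rw [one_div, inv_inv, one_div, inv_inv]; ring
  have h := ENNReal.lintegral_mul_le_Lp_mul_Lq (Measure.count : Measure ι3) hpq
    (Measurable.of_discrete (f := fun m => (x m)^θ)).aemeasurable
    (Measurable.of_discrete (f := fun m => (y m)^(1-θ))).aemeasurable
  simp only [lintegral_count, Pi.mul_apply] at h
  have hx : ∀ m, ((x m)^θ)^(1/θ:ℝ) = x m := by
    intro m
    rw [← ENNReal.rpow_mul]
    rw [mul_one_div, div_self hθ0.ne', ENNReal.rpow_one]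
  have hy : ∀ m, ((y m)^(1-θ))^(1/(1-θ):ℝ) = y m := by
    intro m
    rw [← ENNReal.rpow_mul]
    rw [mul_one_div, div_self (by linarith : (1:ℝ)-θ ≠ 0), ENNReal.rpow_one]
  simp only [hx, hy] at h
  rw [one_div_one_div, one_div_one_div] at h
  exact h

/-- `ENNReal` version of the key kernel bound. -/
lemma key_tsum (α : ℝ) (hα0 : 0 ≤ α) (hα1 : α < 1) (n : ι3) :
    ∑' m, W m ^ (-(1+α/2)) * W (n-m) ^ (-(1+α/2))
      ≤ ENNReal.ofReal (2 * 4^(1+α/2) * (1 + 196/(1-α)) + 3136) * W n ^ (-(1/2+α)) := by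
  have e1 : (0:ℝ) ≤ 4^(1+α/2) := Real.rpow_nonneg (by norm_num) _
  have e2 : (0:ℝ) ≤ 196/(1-α) := div_nonneg (by norm_num) (by linarith)
  rw [W_rpow, ← ENNReal.ofReal_mul (by nlinarith)]
  apply Summable.tsum_le_of_sum_le ENNReal.summable
  intro F
  have heq : ∑ m ∈ F, W m ^ (-(1+α/2)) * W (n-m) ^ (-(1+α/2))
      = ENNReal.ofReal (∑ m ∈ F, (qq m)^(-(1+α/2)) * (qq (n-m))^(-(1+α/2))) := by
    rw [ENNReal.ofReal_sum_of_nonneg (fun m _ =>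
      mul_nonneg (qq_rpow_nonneg _ m) (qq_rpow_nonneg _ _))]
    apply Finset.sum_congr rfl
    intro m _
    rw [W_rpow, W_rpow, ← ENNReal.ofReal_mul (Real.rpow_nonneg (qq_pos m).le _)]
  rw [heq]
  exact ENNReal.ofReal_le_ofReal (key_finset α hα0 hα1 n F)

/-- The weighted square sum, `rpow` version. -/
noncomputable def SS (s : ℝ) (a : ι3 → ℂ) : ℝ≥0∞ :=
  ∑' n, W n ^ s * ((‖a n‖₊ : ℝ≥0∞)) ^ (2:ℝ)

lemma Ns_eq (s : ℝ) (a : ι3 → ℂ) : Ns s a = (SS s a) ^ (1/2:ℝ) := by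
  unfold Ns SS
  congr 1
  apply tsum_congr
  intro n
  have h1 : ENNReal.ofReal ((qq n) ^ s * ‖a n‖ ^ 2)
      = ENNReal.ofReal ((qq n)^s) * ENNReal.ofReal (‖a n‖^2) :=
    ENNReal.ofReal_mul (Real.rpow_nonneg (qq_pos n).le s)
  have h2 : ENNReal.ofReal (‖a n‖^2) = ((‖a n‖₊ : ℝ≥0∞)) ^ (2:ℝ) := by
    rw [ENNReal.rpow_two, ENNReal.ofReal_pow (norm_nonneg _), ofReal_norm_eq_coe_nnnorm]
  show ENNReal.ofReal ((1 + ∑ i, ((n i : ℝ)) ^ 2) ^ s * ‖a n‖ ^ 2) = _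
  rw [show (1 + ∑ i, ((n i : ℝ)) ^ 2) = qq n from rfl, h1, h2, W_rpow]

/-- Pointwise bound for the convolution. -/
lemma conv_pointwise (a b : ι3 → ℂ) (n : ι3) :
    ((‖conv a b n‖₊ : ℝ≥0∞)) ≤ ∑' m, ((‖a m‖₊ : ℝ≥0∞)) * ((‖b (n-m)‖₊ : ℝ≥0∞)) := by
  by_cases hsumm : Summable (fun m => a m * b (n - m))
  · have hnorm : Summable (fun m => ‖a m * b (n - m)‖) := summable_norm_iff.2 hsumm
    have h1 : ‖conv a b n‖ ≤ ∑' m, ‖a m * b (n-m)‖ := norm_tsum_le_tsum_norm hnorm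
    calc ((‖conv a b n‖₊ : ℝ≥0∞)) = ENNReal.ofReal ‖conv a b n‖ :=
          (ofReal_norm_eq_coe_nnnorm _).symm
      _ ≤ ENNReal.ofReal (∑' m, ‖a m * b (n-m)‖) := ENNReal.ofReal_le_ofReal h1
      _ = ∑' m, ENNReal.ofReal ‖a m * b (n-m)‖ :=
          ENNReal.ofReal_tsum_of_nonneg (fun m => norm_nonneg _) hnorm
      _ = ∑' m, ((‖a m‖₊ : ℝ≥0∞)) * ((‖b (n-m)‖₊ : ℝ≥0∞)) := by
          apply tsum_congr
          intro m
          rw [norm_mul, ENNReal.ofReal_mul (norm_nonneg _), ofReal_norm_eq_coe_nnnorm,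
            ofReal_norm_eq_coe_nnnorm]
  · have : conv a b n = 0 := tsum_eq_zero_of_not_summable hsumm
    rw [this]
    simp

/-- Cauchy–Schwarz with weights, applied to the convolution sum. -/
lemma cs_step (α : ℝ) (a b : ι3 → ℂ) (n : ι3) :
    (∑' m, ((‖a m‖₊ : ℝ≥0∞)) * ((‖b (n-m)‖₊ : ℝ≥0∞))) ^ (2:ℝ)
      ≤ (∑' m, W m ^ (-(1+α/2)) * W (n-m) ^ (-(1+α/2)))
        * (∑' m, (W m ^ (1+α/2) * ((‖a m‖₊ : ℝ≥0∞))^(2:ℝ))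
            * (W (n-m) ^ (1+α/2) * ((‖b (n-m)‖₊ : ℝ≥0∞))^(2:ℝ))) := by
  set p : ℝ := 1 + α/2 with hp
  set f : ι3 → ℝ≥0∞ := fun m => W m ^ (-(p/2)) * W (n-m) ^ (-(p/2)) with hf
  set g : ι3 → ℝ≥0∞ := fun m =>
    (W m ^ (p/2) * (‖a m‖₊ : ℝ≥0∞)) * (W (n-m) ^ (p/2) * (‖b (n-m)‖₊ : ℝ≥0∞)) with hg
  have hWone : ∀ k : ι3, W k ^ (-(p/2)) * W k ^ (p/2) = 1 := by
    intro k
    rw [← ENNReal.rpow_add _ _ (W_ne_zero k) (W_ne_top k)]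
    norm_num
  have hfg : ∀ m, ((‖a m‖₊ : ℝ≥0∞)) * ((‖b (n-m)‖₊ : ℝ≥0∞)) = f m * g m := by
    intro m
    rw [hf, hg]
    calc ((‖a m‖₊ : ℝ≥0∞)) * ((‖b (n-m)‖₊ : ℝ≥0∞))
        = (W m ^ (-(p/2)) * W m ^ (p/2)) * (W (n-m) ^ (-(p/2)) * W (n-m) ^ (p/2))
            * (((‖a m‖₊ : ℝ≥0∞)) * ((‖b (n-m)‖₊ : ℝ≥0∞))) := by
          rw [hWone, hWone, one_mul, one_mul]
      _ = (W m ^ (-(p/2)) * W (n-m) ^ (-(p/2)))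
            * ((W m ^ (p/2) * (‖a m‖₊ : ℝ≥0∞)) * (W (n-m) ^ (p/2) * (‖b (n-m)‖₊ : ℝ≥0∞))) := by
          ring
  have hf2 : ∀ m, f m ^ (2:ℝ) = W m ^ (-p) * W (n-m) ^ (-p) := by
    intro m
    rw [hf]
    rw [ENNReal.mul_rpow_of_nonneg _ _ (by norm_num : (0:ℝ) ≤ 2),
      ← ENNReal.rpow_mul, ← ENNReal.rpow_mul]
    norm_num
  have hg2 : ∀ m, g m ^ (2:ℝ)
      = (W m ^ p * ((‖a m‖₊ : ℝ≥0∞))^(2:ℝ)) * (W (n-m) ^ p * ((‖b (n-m)‖₊ : ℝ≥0∞))^(2:ℝ)) := by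
    intro m
    rw [hg]
    rw [ENNReal.mul_rpow_of_nonneg _ _ (by norm_num : (0:ℝ) ≤ 2),
      ENNReal.mul_rpow_of_nonneg _ _ (by norm_num : (0:ℝ) ≤ 2),
      ENNReal.mul_rpow_of_nonneg _ _ (by norm_num : (0:ℝ) ≤ 2),
      ← ENNReal.rpow_mul, ← ENNReal.rpow_mul]
    norm_num
  have hcs := tsum_cs f g
  have hmain : ∑' m, ((‖a m‖₊ : ℝ≥0∞)) * ((‖b (n-m)‖₊ : ℝ≥0∞))
      ≤ ((∑' m, W m ^ (-p) * W (n-m) ^ (-p)) ^ (1/2:ℝ))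
        * ((∑' m, (W m ^ p * ((‖a m‖₊ : ℝ≥0∞))^(2:ℝ))
            * (W (n-m) ^ p * ((‖b (n-m)‖₊ : ℝ≥0∞))^(2:ℝ))) ^ (1/2:ℝ)) := by
    rw [tsum_congr hfg]
    rw [← tsum_congr hf2, ← tsum_congr hg2]
    exact hcs
  calc (∑' m, ((‖a m‖₊ : ℝ≥0∞)) * ((‖b (n-m)‖₊ : ℝ≥0∞))) ^ (2:ℝ)
      ≤ (((∑' m, W m ^ (-p) * W (n-m) ^ (-p)) ^ (1/2:ℝ))
        * ((∑' m, (W m ^ p * ((‖a m‖₊ : ℝ≥0∞))^(2:ℝ))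
            * (W (n-m) ^ p * ((‖b (n-m)‖₊ : ℝ≥0∞))^(2:ℝ))) ^ (1/2:ℝ))) ^ (2:ℝ) :=
        ENNReal.rpow_le_rpow hmain (by norm_num)
    _ = (∑' m, W m ^ (-p) * W (n-m) ^ (-p))
        * (∑' m, (W m ^ p * ((‖a m‖₊ : ℝ≥0∞))^(2:ℝ))
            * (W (n-m) ^ p * ((‖b (n-m)‖₊ : ℝ≥0∞))^(2:ℝ))) := by
        rw [ENNReal.mul_rpow_of_nonneg _ _ (by norm_num : (0:ℝ) ≤ 2),
          ← ENNReal.rpow_mul, ← ENNReal.rpow_mul]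
        norm_num

/-- Hölder interpolation for the weighted sums. -/
lemma interp (α : ℝ) (hα0 : 0 ≤ α) (hα1 : α < 1) (c : ι3 → ℝ≥0∞) :
    ∑' m, W m ^ (1+α/2) * c m
      ≤ (∑' m, W m ^ (1/2+α) * c m) ^ ((1+α)/2) * (∑' m, W m ^ (3/2+α) * c m) ^ ((1-α)/2) := by
  set θ : ℝ := (1+α)/2 with hθ
  have hθ0 : 0 < θ := by rw [hθ]; linarith
  have hθ1 : θ < 1 := by rw [hθ]; linarith
  have h1θ : 1 - θ = (1-α)/2 := by rw [hθ]; ring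
  have hterm : ∀ m, (W m ^ ((1:ℝ)/2+α) * c m) ^ θ * (W m ^ ((3:ℝ)/2+α) * c m) ^ (1-θ)
      = W m ^ (1+α/2) * c m := by
    intro m
    rw [ENNReal.mul_rpow_of_nonneg _ _ hθ0.le,
      ENNReal.mul_rpow_of_nonneg _ _ (by linarith : (0:ℝ) ≤ 1-θ),
      ← ENNReal.rpow_mul, ← ENNReal.rpow_mul]
    calc W m ^ ((1/2+α)*θ) * c m ^ θ * (W m ^ ((3/2+α)*(1-θ)) * c m ^ (1-θ))
        = (W m ^ ((1/2+α)*θ) * W m ^ ((3/2+α)*(1-θ))) * (c m ^ θ * c m ^ (1-θ)) := by ring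
      _ = W m ^ (1+α/2) * c m := by
          rw [← ENNReal.rpow_add _ _ (W_ne_zero m) (W_ne_top m),
            ← ENNReal.rpow_add_of_nonneg _ _ hθ0.le (by linarith : (0:ℝ) ≤ 1-θ)]
          congr 1
          · congr 1
            rw [hθ]; ring
          · rw [show θ + (1-θ) = (1:ℝ) by ring, ENNReal.rpow_one]
  rw [← tsum_congr hterm, ← h1θ]
  exact tsum_holder hθ0 hθ1 _ _

/-- Fubini and translation invariance. -/
lemma fubini_prod (u v : ι3 → ℝ≥0∞) :
    ∑' n, ∑' m, u m * v (n - m) = (∑' m, u m) * (∑' k, v k) := by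
  rw [ENNReal.tsum_comm]
  have h : ∀ m, ∑' n, u m * v (n - m) = u m * ∑' k, v k := by
    intro m
    rw [ENNReal.tsum_mul_left]
    congr 1
    exact (Equiv.subRight m).tsum_eq v
  rw [tsum_congr h, ENNReal.tsum_mul_right]

/-- Main bound at the level of squared sums. -/
lemma main_bound (α : ℝ) (hα0 : 0 ≤ α) (hα1 : α < 1) (a b : ι3 → ℂ) :
    SS (1/2+α) (conv a b)
      ≤ ENNReal.ofReal (2 * 4^(1+α/2) * (1 + 196/(1-α)) + 3136)
        * ((SS (1/2+α) a ^ ((1+α)/2) * SS (3/2+α) a ^ ((1-α)/2))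
          * (SS (1/2+α) b ^ ((1+α)/2) * SS (3/2+α) b ^ ((1-α)/2))) := by
  set Kc : ℝ≥0∞ := ENNReal.ofReal (2 * 4^(1+α/2) * (1 + 196/(1-α)) + 3136) with hKc
  set p : ℝ := 1 + α/2 with hp
  set s : ℝ := 1/2 + α with hs
  set A : ι3 → ℝ≥0∞ := fun m => ((‖a m‖₊ : ℝ≥0∞))^(2:ℝ) with hA
  set B : ι3 → ℝ≥0∞ := fun m => ((‖b m‖₊ : ℝ≥0∞))^(2:ℝ) with hB
  set G : ι3 → ℝ≥0∞ := fun n => ∑' m, (W m ^ p * A m) * (W (n-m) ^ p * B (n-m)) with hG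
  have hWein : ∀ n : ι3, W n ^ s * (W n)^(-s) = 1 := by
    intro n
    rw [← ENNReal.rpow_add _ _ (W_ne_zero n) (W_ne_top n)]
    norm_num
  have step_n : ∀ n : ι3, W n ^ s * ((‖conv a b n‖₊ : ℝ≥0∞))^(2:ℝ) ≤ Kc * G n := by
    intro n
    have h1 : ((‖conv a b n‖₊ : ℝ≥0∞))^(2:ℝ)
        ≤ (∑' m, ((‖a m‖₊ : ℝ≥0∞)) * ((‖b (n-m)‖₊ : ℝ≥0∞)))^(2:ℝ) :=
      ENNReal.rpow_le_rpow (conv_pointwise a b n) (by norm_num)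
    have h2 := cs_step α a b n
    have h3 := key_tsum α hα0 hα1 n
    calc W n ^ s * ((‖conv a b n‖₊ : ℝ≥0∞))^(2:ℝ)
        ≤ W n ^ s * ((∑' m, W m ^ (-p) * W (n-m) ^ (-p)) * G n) := by
          apply mul_le_mul_right (h1.trans h2)
      _ ≤ W n ^ s * ((Kc * W n ^ (-s)) * G n) := by
          apply mul_le_mul_right
          exact mul_le_mul_left h3 _
      _ = (W n ^ s * W n ^ (-s)) * (Kc * G n) := by ring
      _ = Kc * G n := by rw [hWein, one_mul]
  have hsum : SS s (conv a b) ≤ Kc * ∑' n, G n := by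
    calc SS s (conv a b) ≤ ∑' n, Kc * G n := by
          apply Summable.tsum_le_tsum _ ENNReal.summable ENNReal.summable
          intro n
          exact step_n n
      _ = Kc * ∑' n, G n := ENNReal.tsum_mul_left
  have hGprod : ∑' n, G n = (∑' m, W m ^ p * A m) * (∑' k, W k ^ p * B k) :=
    fubini_prod (fun m => W m ^ p * A m) (fun k => W k ^ p * B k)
  have hIA : ∑' m, W m ^ p * A m ≤ SS (1/2+α) a ^ ((1+α)/2) * SS (3/2+α) a ^ ((1-α)/2) :=
    interp α hα0 hα1 A
  have hIB : ∑' m, W m ^ p * B m ≤ SS (1/2+α) b ^ ((1+α)/2) * SS (3/2+α) b ^ ((1-α)/2) :=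
    interp α hα0 hα1 B
  calc SS s (conv a b) ≤ Kc * ∑' n, G n := hsum
    _ = Kc * ((∑' m, W m ^ p * A m) * (∑' k, W k ^ p * B k)) := by rw [hGprod]
    _ ≤ Kc * ((SS (1/2+α) a ^ ((1+α)/2) * SS (3/2+α) a ^ ((1-α)/2))
          * (SS (1/2+α) b ^ ((1+α)/2) * SS (3/2+α) b ^ ((1-α)/2))) := by
        apply mul_le_mul_right
        exact mul_le_mul' hIA hIB

lemma rpow_swap (x : ℝ≥0∞) (u v : ℝ) : (x^u)^v = (x^v)^u := by
  rw [← ENNReal.rpow_mul, mul_comm, ENNReal.rpow_mul]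

end NsAux

open NsAux

/-- Product-and-interpolation chain:
`N_{1/2+α}(a*b) ≤ C N_{1/2+α}(a)^{(1+α)/2} N_{3/2+α}(a)^{(1-α)/2}
  N_{1/2+α}(b)^{(1+α)/2} N_{3/2+α}(b)^{(1-α)/2}`. -/
theorem Ns_product_interpolation (α : ℝ) (hα0 : 0 ≤ α) (hα1 : α < 1) :
    ∃ C : ℝ, 0 < C ∧ ∀ a b : (Fin 3 → ℤ) → ℂ,
      Ns (1 / 2 + α) a < ⊤ → Ns (3 / 2 + α) a < ⊤ →
      Ns (1 / 2 + α) b < ⊤ → Ns (3 / 2 + α) b < ⊤ →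
      Ns (1 / 2 + α) (conv a b) ≤ ENNReal.ofReal C *
        Ns (1 / 2 + α) a ^ ((1 + α) / 2) * Ns (3 / 2 + α) a ^ ((1 - α) / 2) *
        Ns (1 / 2 + α) b ^ ((1 + α) / 2) * Ns (3 / 2 + α) b ^ ((1 - α) / 2) := by
  set Kr : ℝ := 2 * 4^(1+α/2) * (1 + 196/(1-α)) + 3136 with hKr
  have h4 : (0:ℝ) < 4^(1+α/2) := Real.rpow_pos_of_pos (by norm_num) _
  have hdiv : (0:ℝ) < 196/(1-α) := div_pos (by norm_num) (by linarith)
  have hKrpos : 0 < Kr := by rw [hKr]; nlinarith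
  refine ⟨Kr ^ (1/2:ℝ), Real.rpow_pos_of_pos hKrpos _, ?_⟩
  intro a b _ _ _ _
  have hmb := main_bound α hα0 hα1 a b
  rw [Ns_eq, Ns_eq, Ns_eq, Ns_eq, Ns_eq]
  have hhalf : (0:ℝ) ≤ 1/2 := by norm_num
  calc SS (1/2+α) (conv a b) ^ (1/2:ℝ)
      ≤ (ENNReal.ofReal Kr * ((SS (1/2+α) a ^ ((1+α)/2) * SS (3/2+α) a ^ ((1-α)/2))
          * (SS (1/2+α) b ^ ((1+α)/2) * SS (3/2+α) b ^ ((1-α)/2)))) ^ (1/2:ℝ) :=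
        ENNReal.rpow_le_rpow hmb hhalf
    _ = (ENNReal.ofReal Kr) ^ (1/2:ℝ)
        * (((SS (1/2+α) a ^ ((1+α)/2)) ^ (1/2:ℝ) * (SS (3/2+α) a ^ ((1-α)/2)) ^ (1/2:ℝ))
          * ((SS (1/2+α) b ^ ((1+α)/2)) ^ (1/2:ℝ) * (SS (3/2+α) b ^ ((1-α)/2)) ^ (1/2:ℝ))) := by
        simp only [ENNReal.mul_rpow_of_nonneg _ _ hhalf]
    _ = ENNReal.ofReal (Kr ^ (1/2:ℝ))
        * ((SS (1/2+α) a ^ (1/2:ℝ)) ^ ((1+α)/2) * (SS (3/2+α) a ^ (1/2:ℝ)) ^ ((1-α)/2)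
          * ((SS (1/2+α) b ^ (1/2:ℝ)) ^ ((1+α)/2) * (SS (3/2+α) b ^ (1/2:ℝ)) ^ ((1-α)/2))) := by
        rw [ENNReal.ofReal_rpow_of_pos hKrpos, rpow_swap (SS (1/2+α) a),
          rpow_swap (SS (3/2+α) a), rpow_swap (SS (1/2+α) b), rpow_swap (SS (3/2+α) b)]
    _ = ENNReal.ofReal (Kr ^ (1/2:ℝ)) * (SS (1/2+α) a ^ (1/2:ℝ)) ^ ((1+α)/2)
        * (SS (3/2+α) a ^ (1/2:ℝ)) ^ ((1-α)/2) * (SS (1/2+α) b ^ (1/2:ℝ)) ^ ((1+α)/2)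
        * (SS (3/2+α) b ^ (1/2:ℝ)) ^ ((1-α)/2) := by ring
end

section
/- For every $\delta \in (0,1)$ there exists a constant $C = C(\delta) > 0$ such that for all $a, b : \mathbb{Z}^3 \to \mathbb{C}$ with $N_{3/2+\delta}(a) < \infty$ and $N_{3/2+\delta}(b) < \infty$, one has $N_{1/2+\delta}(a*b)^2 \le C \big( N_{1/2+\delta}(a)^2 \, N_{3/2+\delta}(b)^2 + N_{3/2+\delta}(a)^2 \, N_{1/2+\delta}(b)^2 \big)$. -/
open scoped ENNReal NNReal BigOperators

namespace NsAux

open MeasureTheory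

abbrev Z3 := Fin 3 → ℤ

noncomputable def Q (n : Z3) : ℝ := 1 + ∑ i : Fin 3, ((n i : ℝ)) ^ 2

lemma one_le_Q (n : Z3) : 1 ≤ Q n :=
  le_add_of_nonneg_right (Finset.sum_nonneg fun _ _ => sq_nonneg _)

lemma Q_pos (n : Z3) : 0 < Q n := lt_of_lt_of_le one_pos (one_le_Q n)

/-- Cauchy–Schwarz for `ℝ≥0∞`-valued tsums. -/
lemma cs {ι : Type*} [Countable ι] [MeasurableSpace ι] [MeasurableSingletonClass ι]
    (f g : ι → ℝ≥0∞) :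
    ∑' i, f i * g i ≤ (∑' i, f i ^ 2) ^ (1/2 : ℝ) * (∑' i, g i ^ 2) ^ (1/2 : ℝ) := by
  have hpq : Real.HolderConjugate 2 2 := Real.holderConjugate_iff.mpr ⟨one_lt_two, by norm_num⟩
  have h := ENNReal.lintegral_mul_le_Lp_mul_Lq (μ := Measure.count) hpq
    (measurable_of_countable f).aemeasurable (measurable_of_countable g).aemeasurable
  simp only [lintegral_count, Pi.mul_apply] at h
  have h2 : ∀ x : ℝ≥0∞, x ^ (2:ℝ) = x ^ 2 := fun x => by
    rw [show (2:ℝ) = ((2:ℕ):ℝ) by norm_num, ENNReal.rpow_natCast]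
  simpa [h2] using h

lemma half_sq (x : ℝ≥0∞) : (x ^ (1/2 : ℝ)) ^ 2 = x := by
  rw [← ENNReal.rpow_natCast (x ^ (1/2:ℝ)) 2, ← ENNReal.rpow_mul]
  norm_num

lemma sq_add_le (x y : ℝ≥0∞) : (x + y) ^ 2 ≤ 2 * (x ^ 2 + y ^ 2) := by
  rcases eq_or_ne x ⊤ with rfl | hx
  · simp [pow_two, ENNReal.top_mul, ENNReal.add_eq_top]
  rcases eq_or_ne y ⊤ with rfl | hy
  · simp [pow_two, ENNReal.top_mul, ENNReal.add_eq_top]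
  lift x to ℝ≥0 using hx
  lift y to ℝ≥0 using hy
  rw [← ENNReal.coe_add, ← ENNReal.coe_pow, ← ENNReal.coe_pow, ← ENNReal.coe_pow,
    ← ENNReal.coe_add, show (2:ℝ≥0∞) = ((2:ℝ≥0):ℝ≥0∞) by norm_cast, ← ENNReal.coe_mul,
    ENNReal.coe_le_coe, ← NNReal.coe_le_coe]
  push_cast
  nlinarith [sq_nonneg ((x:ℝ) - y)]

lemma tsum_sub_left (G : Z3 → ℝ≥0∞) (n : Z3) : ∑' m, G (n - m) = ∑' m, G m :=
  (Equiv.subLeft n).tsum_eq G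

lemma tsum_sub_right (G : Z3 → ℝ≥0∞) (m : Z3) : ∑' n, G (n - m) = ∑' n, G n :=
  (Equiv.subRight m).tsum_eq G

lemma conv_comm (F G : Z3 → ℝ≥0∞) (n : Z3) :
    ∑' m, F m * G (n - m) = ∑' m, G m * F (n - m) := by
  rw [← (Equiv.subLeft n).tsum_eq (fun m => F m * G (n - m))]
  refine tsum_congr fun m => ?_
  simp [mul_comm, sub_sub_cancel]

/-- Young's inequality `‖F ⋆ G‖₂² ≤ ‖F‖₂² ‖G‖₁²` for `ℝ≥0∞`-valued sequences. -/
lemma young (F G : Z3 → ℝ≥0∞) :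
    ∑' n, (∑' m, F m * G (n - m)) ^ 2 ≤ (∑' m, F m ^ 2) * (∑' m, G m) ^ 2 := by
  have key : ∀ n : Z3, (∑' m, F m * G (n - m)) ^ 2
      ≤ (∑' m, F m ^ 2 * G (n - m)) * (∑' m, G m) := by
    intro n
    have h1 : ∑' m, F m * G (n - m)
        ≤ (∑' m, F m ^ 2 * G (n - m)) ^ (1/2:ℝ) * (∑' m, G (n - m)) ^ (1/2:ℝ) := by
      have := cs (fun m => F m * G (n - m) ^ (1/2:ℝ)) (fun m => G (n - m) ^ (1/2:ℝ))
      calc ∑' m, F m * G (n - m)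
          = ∑' m, (F m * G (n - m) ^ (1/2:ℝ)) * G (n - m) ^ (1/2:ℝ) := by
            refine tsum_congr fun m => ?_
            rw [mul_assoc, ← ENNReal.rpow_add_of_nonneg (1/2) (1/2) (by norm_num) (by norm_num)]
            norm_num
        _ ≤ (∑' m, (F m * G (n - m) ^ (1/2:ℝ)) ^ 2) ^ (1/2:ℝ)
              * (∑' m, (G (n - m) ^ (1/2:ℝ)) ^ 2) ^ (1/2:ℝ) := this
        _ = (∑' m, F m ^ 2 * G (n - m)) ^ (1/2:ℝ) * (∑' m, G (n - m)) ^ (1/2:ℝ) := by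
            congr 1
            · congr 1
              exact tsum_congr fun m => by rw [mul_pow, half_sq]
            · congr 1
              exact tsum_congr fun m => by rw [half_sq]
    calc (∑' m, F m * G (n - m)) ^ 2
        ≤ ((∑' m, F m ^ 2 * G (n - m)) ^ (1/2:ℝ) * (∑' m, G (n - m)) ^ (1/2:ℝ)) ^ 2 :=
          pow_le_pow_left₀ (zero_le) h1 2
      _ = (∑' m, F m ^ 2 * G (n - m)) * (∑' m, G (n - m)) := by
          rw [mul_pow, half_sq, half_sq]
      _ = (∑' m, F m ^ 2 * G (n - m)) * (∑' m, G m) := by rw [tsum_sub_left]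
  calc ∑' n, (∑' m, F m * G (n - m)) ^ 2
      ≤ ∑' n, (∑' m, F m ^ 2 * G (n - m)) * (∑' m, G m) := ENNReal.tsum_le_tsum key
    _ = (∑' n, ∑' m, F m ^ 2 * G (n - m)) * (∑' m, G m) := ENNReal.tsum_mul_right
    _ = (∑' m, F m ^ 2 * ∑' n, G (n - m)) * (∑' m, G m) := by
        rw [ENNReal.tsum_comm]
        congr 1
        exact tsum_congr fun m => ENNReal.tsum_mul_left
    _ = (∑' m, F m ^ 2) * (∑' m, G m) ^ 2 := by
        rw [pow_two, ← mul_assoc]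
        congr 1
        rw [← ENNReal.tsum_mul_right]
        exact tsum_congr fun m => by rw [tsum_sub_right]

/-- weighted Cauchy–Schwarz: `ℓ¹` norm bounded via weighted `ℓ²` norm. -/
lemma l1_le (t : ℝ) (c : Z3 → ℝ≥0∞) :
    ∑' m, c m ≤ (∑' m, ENNReal.ofReal (Q m ^ (-t))) ^ (1/2:ℝ)
      * (∑' m, ENNReal.ofReal (Q m ^ t) * c m ^ 2) ^ (1/2:ℝ) := by
  have key := cs (fun m => ENNReal.ofReal (Q m ^ (-(t/2))))
    (fun m => ENNReal.ofReal (Q m ^ (t/2)) * c m)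
  have e1 : ∀ m : Z3, ENNReal.ofReal (Q m ^ (-(t/2))) * (ENNReal.ofReal (Q m ^ (t/2)) * c m)
      = c m := by
    intro m
    rw [← mul_assoc, ← ENNReal.ofReal_mul (Real.rpow_nonneg (Q_pos m).le _),
      ← Real.rpow_add (Q_pos m)]
    norm_num
  have e2 : ∀ m : Z3, ENNReal.ofReal (Q m ^ (-(t/2))) ^ 2 = ENNReal.ofReal (Q m ^ (-t)) := by
    intro m
    rw [← ENNReal.ofReal_pow (Real.rpow_nonneg (Q_pos m).le _),
      ← Real.rpow_natCast (Q m ^ (-(t/2))) 2, ← Real.rpow_mul (Q_pos m).le]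
    norm_num
  have e3 : ∀ m : Z3, (ENNReal.ofReal (Q m ^ (t/2)) * c m) ^ 2
      = ENNReal.ofReal (Q m ^ t) * c m ^ 2 := by
    intro m
    rw [mul_pow, ← ENNReal.ofReal_pow (Real.rpow_nonneg (Q_pos m).le _),
      ← Real.rpow_natCast (Q m ^ (t/2)) 2, ← Real.rpow_mul (Q_pos m).le]
    norm_num
  calc ∑' m, c m = ∑' m, ENNReal.ofReal (Q m ^ (-(t/2))) * (ENNReal.ofReal (Q m ^ (t/2)) * c m) :=
        tsum_congr fun m => (e1 m).symm
    _ ≤ (∑' m, ENNReal.ofReal (Q m ^ (-(t/2))) ^ 2) ^ (1/2:ℝ)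
        * (∑' m, (ENNReal.ofReal (Q m ^ (t/2)) * c m) ^ 2) ^ (1/2:ℝ) := key
    _ = _ := by rw [tsum_congr e2, tsum_congr e3]

/-- one-dimensional summability -/
lemma summable_1d {t : ℝ} (ht : 1/2 < t) :
    Summable (fun k : ℤ => (1 + (k:ℝ)^2) ^ (-t)) := by
  have hnat : Summable (fun n : ℕ => (1 + (n:ℝ)^2) ^ (-t)) := by
    rw [← summable_nat_add_iff 1]
    have hmaj : Summable (fun n : ℕ => ((n:ℝ)+1) ^ (-(2*t))) := by
      have := (Real.summable_nat_rpow (p := -(2*t))).mpr (by linarith)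
      have h1 := (summable_nat_add_iff (f := fun n : ℕ => ((n:ℝ)) ^ (-(2*t))) 1).mpr this
      simpa using h1
    refine hmaj.of_nonneg_of_le (fun n => Real.rpow_nonneg (by positivity) _) (fun n => ?_)
    have hb : (0:ℝ) < ((n:ℝ)+1) ^ 2 := by positivity
    have hle : ((n:ℝ)+1) ^ 2 ≤ 1 + ((n:ℕ)+1:ℝ)^2 := by nlinarith
    calc (1 + (((n:ℕ)+1:ℕ):ℝ)^2) ^ (-t) ≤ (((n:ℝ)+1) ^ 2) ^ (-t) := by
          apply Real.rpow_le_rpow_of_nonpos hb _ (by linarith)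
          push_cast
          linarith
      _ = ((n:ℝ)+1) ^ (-(2*t)) := by
          rw [← Real.rpow_natCast ((n:ℝ)+1) 2, ← Real.rpow_mul (by positivity)]
          norm_num [mul_comm]
  apply Summable.of_nat_of_neg
  · exact hnat.congr fun n => by norm_num
  · exact hnat.congr fun n => by push_cast; norm_num

def e3 : Z3 ≃ ℤ × ℤ × ℤ where
  toFun n := (n 0, n 1, n 2)
  invFun p := ![p.1, p.2.1, p.2.2]
  left_inv n := by
    funext i
    fin_cases i <;> rfl
  right_inv p := rfl

lemma tsum_pi_prod (h : ℤ → ℝ≥0∞) :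
    ∑' m : Z3, ∏ i : Fin 3, h (m i) = (∑' k : ℤ, h k) ^ 3 := by
  rw [← e3.symm.tsum_eq (fun m : Z3 => ∏ i : Fin 3, h (m i))]
  have : ∀ p : ℤ × ℤ × ℤ, (∏ i : Fin 3, h (e3.symm p i)) = h p.1 * (h p.2.1 * h p.2.2) := by
    intro p
    rw [Fin.prod_univ_three]
    simp [e3, mul_assoc]
    rfl
  rw [tsum_congr this, ENNReal.tsum_prod']
  simp_rw [ENNReal.tsum_prod', ENNReal.tsum_mul_left]
  rw [ENNReal.tsum_mul_right, ENNReal.tsum_mul_right]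
  ring

/-- Finiteness of the key constant. -/
lemma K_lt_top {δ : ℝ} (hδ0 : 0 < δ) :
    ∑' m : Z3, ENNReal.ofReal (Q m ^ (-(3/2+δ))) < ⊤ := by
  set t : ℝ := 1/2 + δ/3 with ht
  have hpt : ∀ m : Z3, Q m ^ (-(3/2+δ)) ≤ ∏ i : Fin 3, (1 + ((m i:ℝ))^2) ^ (-t) := by
    intro m
    have hfac : ∀ i : Fin 3, (0:ℝ) < 1 + ((m i:ℝ))^2 := fun i => by positivity
    have hfacQ : ∀ i : Fin 3, 1 + ((m i:ℝ))^2 ≤ Q m := by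
      intro i
      have : ((m i:ℝ))^2 ≤ ∑ j : Fin 3, ((m j:ℝ))^2 :=
        Finset.single_le_sum (f := fun j : Fin 3 => ((m j:ℝ))^2)
          (fun j _ => sq_nonneg _) (Finset.mem_univ i)
      simp only [Q]; linarith
    have hP : (0:ℝ) < ∏ i : Fin 3, (1 + ((m i:ℝ))^2) := Finset.prod_pos fun i _ => hfac i
    have hPQ : (∏ i : Fin 3, (1 + ((m i:ℝ))^2)) ≤ Q m ^ (3:ℕ) := by
      rw [Fin.prod_univ_three]
      have h0 := hfacQ 0; have h1 := hfacQ 1; have h2 := hfacQ 2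
      have hq := (Q_pos m).le
      have hq1 := one_le_Q m
      calc (1 + ((m 0:ℝ))^2) * (1 + ((m 1:ℝ))^2) * (1 + ((m 2:ℝ))^2)
          ≤ Q m * Q m * Q m := by
            apply mul_le_mul (mul_le_mul h0 h1 (hfac 1).le hq) h2 (hfac 2).le
            positivity
        _ = Q m ^ (3:ℕ) := by ring
    calc Q m ^ (-(3/2+δ)) = (Q m ^ (3:ℕ)) ^ (-t) := by
          rw [← Real.rpow_natCast (Q m) 3, ← Real.rpow_mul (Q_pos m).le]
          norm_num [ht]
          ring_nf
      _ ≤ (∏ i : Fin 3, (1 + ((m i:ℝ))^2)) ^ (-t) := by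
          apply Real.rpow_le_rpow_of_nonpos hP hPQ
          simp only [ht]; linarith
      _ = ∏ i : Fin 3, (1 + ((m i:ℝ))^2) ^ (-t) := by
          rw [← Real.finset_prod_rpow _ _ (fun i _ => (hfac i).le)]
  have step1 : ∑' m : Z3, ENNReal.ofReal (Q m ^ (-(3/2+δ)))
      ≤ ∑' m : Z3, ∏ i : Fin 3, ENNReal.ofReal ((1 + ((m i:ℝ))^2) ^ (-t)) := by
    apply ENNReal.tsum_le_tsum
    intro m
    rw [← ENNReal.ofReal_prod_of_nonneg (fun i _ => Real.rpow_nonneg (by positivity) _)]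
    exact ENNReal.ofReal_le_ofReal (hpt m)
  have step2 : ∑' m : Z3, ∏ i : Fin 3, ENNReal.ofReal ((1 + ((m i:ℝ))^2) ^ (-t))
      = (∑' k : ℤ, ENNReal.ofReal ((1 + (k:ℝ)^2) ^ (-t))) ^ 3 :=
    tsum_pi_prod (fun k : ℤ => ENNReal.ofReal ((1 + (k:ℝ)^2) ^ (-t)))
  have step3 : (∑' k : ℤ, ENNReal.ofReal ((1 + (k:ℝ)^2) ^ (-t))) < ⊤ := by
    have hs := summable_1d (t := t) (by rw [ht]; linarith)
    rw [← ENNReal.ofReal_tsum_of_nonneg (fun k => Real.rpow_nonneg (by positivity) _) hs]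
    exact ENNReal.ofReal_lt_top
  calc ∑' m : Z3, ENNReal.ofReal (Q m ^ (-(3/2+δ))) ≤ _ := step1
    _ = _ := step2
    _ < ⊤ := by
      rw [lt_top_iff_ne_top]
      exact ENNReal.pow_ne_top step3.ne

/-- the weight splitting: `Q(m+k)^t ≤ 4^t (Q m ^t + Q k ^t)` for `t ≥ 0`. -/
lemma Q_split {t : ℝ} (ht : 0 ≤ t) (m k : Z3) :
    Q (m + k) ^ t ≤ 4 ^ t * (Q m ^ t + Q k ^ t) := by
  have hQ : Q (m + k) ≤ 2 * Q m + 2 * Q k := by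
    simp only [Q]
    have : ∀ i : Fin 3, (((m + k) i : ℝ))^2 ≤ 2 * ((m i:ℝ))^2 + 2 * ((k i:ℝ))^2 := by
      intro i
      have : (((m+k) i : ℤ) : ℝ) = (m i : ℝ) + (k i : ℝ) := by simp
      rw [this]
      nlinarith [sq_nonneg ((m i:ℝ) - (k i:ℝ))]
    have hsum := Finset.sum_le_sum (fun i (_ : i ∈ Finset.univ) => this i)
    rw [Finset.sum_add_distrib, ← Finset.mul_sum, ← Finset.mul_sum] at hsum
    linarith
  rcases le_total (Q m) (Q k) with h | h
  · have h4 : Q (m + k) ≤ 4 * Q k := by linarith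
    calc Q (m + k) ^ t ≤ (4 * Q k) ^ t :=
          Real.rpow_le_rpow (Q_pos _).le h4 ht
      _ = 4 ^ t * Q k ^ t := Real.mul_rpow (by norm_num) (Q_pos _).le
      _ ≤ 4 ^ t * (Q m ^ t + Q k ^ t) := by
          have := Real.rpow_nonneg (Q_pos m).le t
          have h4t : (0:ℝ) ≤ 4 ^ t := Real.rpow_nonneg (by norm_num) t
          nlinarith
  · have h4 : Q (m + k) ≤ 4 * Q m := by linarith
    calc Q (m + k) ^ t ≤ (4 * Q m) ^ t :=
          Real.rpow_le_rpow (Q_pos _).le h4 ht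
      _ = 4 ^ t * Q m ^ t := Real.mul_rpow (by norm_num) (Q_pos _).le
      _ ≤ 4 ^ t * (Q m ^ t + Q k ^ t) := by
          have := Real.rpow_nonneg (Q_pos k).le t
          have h4t : (0:ℝ) ≤ 4 ^ t := Real.rpow_nonneg (by norm_num) t
          nlinarith

lemma Ns_sq {E : Type*} [NormedAddCommGroup E] (s : ℝ) (a : Z3 → E) :
    Ns s a ^ 2 = ∑' n, ENNReal.ofReal (Q n ^ s) * ((‖a n‖₊ : ℝ≥0∞)) ^ 2 := by
  rw [Ns, half_sq]
  refine tsum_congr fun n => ?_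
  simp only [Q]
  rw [ENNReal.ofReal_mul (Real.rpow_nonneg (by positivity) s),
    ENNReal.ofReal_pow (norm_nonneg _), ← coe_nnnorm, ENNReal.ofReal_coe_nnreal]

lemma enorm_conv_le (a b : Z3 → ℂ) (n : Z3) :
    (‖conv a b n‖₊ : ℝ≥0∞) ≤ ∑' m, (‖a m‖₊ : ℝ≥0∞) * (‖b (n - m)‖₊ : ℝ≥0∞) := by
  by_cases hS : (∑' m, (‖a m‖₊ : ℝ≥0∞) * (‖b (n - m)‖₊ : ℝ≥0∞)) = ⊤
  · exact hS ▸ le_top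
  have hcoe : (∑' m, (‖a m‖₊ : ℝ≥0∞) * (‖b (n - m)‖₊ : ℝ≥0∞))
      = ∑' m, ((‖a m * b (n - m)‖₊ : ℝ≥0) : ℝ≥0∞) := by
    refine tsum_congr fun m => ?_
    rw [nnnorm_mul, ENNReal.coe_mul]
  rw [hcoe] at hS ⊢
  have hsumnn : Summable (fun m => ‖a m * b (n - m)‖₊) :=
    ENNReal.tsum_coe_ne_top_iff_summable.mp hS
  rw [← ENNReal.coe_tsum hsumnn, ENNReal.coe_le_coe, conv]
  exact nnnorm_tsum_le hsumnn

end NsAux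

/-- Symmetric product estimate:
`N_{1/2+δ}(a*b)² ≤ C (N_{1/2+δ}(a)² N_{3/2+δ}(b)² + N_{3/2+δ}(a)² N_{1/2+δ}(b)²)`. -/
theorem Ns_product_symmetric (δ : ℝ) (hδ0 : 0 < δ) (hδ1 : δ < 1) :
    ∃ C : ℝ, 0 < C ∧ ∀ a b : (Fin 3 → ℤ) → ℂ,
      Ns (3 / 2 + δ) a < ⊤ → Ns (3 / 2 + δ) b < ⊤ →
      Ns (1 / 2 + δ) (conv a b) ^ 2 ≤ ENNReal.ofReal C *
        (Ns (1 / 2 + δ) a ^ 2 * Ns (3 / 2 + δ) b ^ 2 +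
          Ns (3 / 2 + δ) a ^ 2 * Ns (1 / 2 + δ) b ^ 2) := by
  classical
  open NsAux in
  set s₁ : ℝ := 1 / 2 + δ with hs₁
  set s₂ : ℝ := 3 / 2 + δ with hs₂
  have hs₁pos : 0 < s₁ := by rw [hs₁]; linarith
  set K : ℝ≥0∞ := ∑' m : Z3, ENNReal.ofReal (Q m ^ (-s₂)) with hKdef
  have hK : K < ⊤ := K_lt_top hδ0
  set u : Z3 → ℝ≥0∞ := fun n => ENNReal.ofReal (Q n ^ (s₁ / 2)) with hu
  have usq : ∀ n : Z3, u n ^ 2 = ENNReal.ofReal (Q n ^ s₁) := by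
    intro n
    rw [hu, ← ENNReal.ofReal_pow (Real.rpow_nonneg (Q_pos n).le _),
      ← Real.rpow_natCast (Q n ^ (s₁/2)) 2, ← Real.rpow_mul (Q_pos n).le]
    norm_num
  set c : ℝ≥0∞ := ENNReal.ofReal (4 ^ (s₁ / 2)) with hc
  have hcsq : c ^ 2 = ENNReal.ofReal (4 ^ s₁) := by
    rw [hc, ← ENNReal.ofReal_pow (Real.rpow_nonneg (by norm_num) _),
      ← Real.rpow_natCast ((4:ℝ) ^ (s₁/2)) 2, ← Real.rpow_mul (by norm_num)]
    norm_num
  refine ⟨2 * 4 ^ s₁ * (K.toReal + 1), by positivity, fun a b _ _ => ?_⟩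
  set A0 : Z3 → ℝ≥0∞ := fun m => (‖a m‖₊ : ℝ≥0∞) with hA0
  set B0 : Z3 → ℝ≥0∞ := fun m => (‖b m‖₊ : ℝ≥0∞) with hB0
  set A1 : Z3 → ℝ≥0∞ := fun m => u m * A0 m with hA1
  set B1 : Z3 → ℝ≥0∞ := fun m => u m * B0 m with hB1
  -- pointwise bound
  have hpt : ∀ n : Z3, u n * (‖conv a b n‖₊ : ℝ≥0∞)
      ≤ c * ((∑' m, A1 m * B0 (n - m)) + ∑' m, A0 m * B1 (n - m)) := by
    intro n
    have hsplit : ∀ m : Z3, u n ≤ c * (u m + u (n - m)) := by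
      intro m
      have h := Q_split (t := s₁ / 2) (by positivity) m (n - m)
      rw [show m + (n - m) = n by abel] at h
      calc u n ≤ ENNReal.ofReal (4 ^ (s₁/2) * (Q m ^ (s₁/2) + Q (n-m) ^ (s₁/2))) :=
            ENNReal.ofReal_le_ofReal h
        _ = c * (u m + u (n - m)) := by
            rw [ENNReal.ofReal_mul (Real.rpow_nonneg (by norm_num) _),
              ENNReal.ofReal_add (Real.rpow_nonneg (Q_pos m).le _)
                (Real.rpow_nonneg (Q_pos (n-m)).le _)]
    calc u n * (‖conv a b n‖₊ : ℝ≥0∞)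
        ≤ u n * ∑' m, A0 m * B0 (n - m) := mul_le_mul_right (enorm_conv_le a b n) _
      _ = ∑' m, u n * (A0 m * B0 (n - m)) := ENNReal.tsum_mul_left.symm
      _ ≤ ∑' m, c * (A1 m * B0 (n - m) + A0 m * B1 (n - m)) := by
          apply ENNReal.tsum_le_tsum
          intro m
          calc u n * (A0 m * B0 (n - m))
              ≤ (c * (u m + u (n - m))) * (A0 m * B0 (n - m)) :=
                mul_le_mul_left (hsplit m) _
            _ = c * (A1 m * B0 (n - m) + A0 m * B1 (n - m)) := by
                rw [hA1, hB1]; ring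
      _ = c * ((∑' m, A1 m * B0 (n - m)) + ∑' m, A0 m * B1 (n - m)) := by
          rw [ENNReal.tsum_mul_left, ENNReal.tsum_add]
  -- squared sum bound
  set P : Z3 → ℝ≥0∞ := fun n => ∑' m, A1 m * B0 (n - m) with hP
  set R : Z3 → ℝ≥0∞ := fun n => ∑' m, A0 m * B1 (n - m) with hR
  have hmain : Ns s₁ (conv a b) ^ 2
      ≤ 2 * c ^ 2 * ((∑' n, P n ^ 2) + ∑' n, R n ^ 2) := by
    rw [Ns_sq]
    calc ∑' n, ENNReal.ofReal (Q n ^ s₁) * ((‖conv a b n‖₊ : ℝ≥0∞)) ^ 2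
        = ∑' n, (u n * (‖conv a b n‖₊ : ℝ≥0∞)) ^ 2 := by
          refine tsum_congr fun n => ?_
          rw [mul_pow, usq]
      _ ≤ ∑' n, (c * (P n + R n)) ^ 2 := by
          apply ENNReal.tsum_le_tsum
          intro n
          exact pow_le_pow_left₀ (zero_le) (hpt n) 2
      _ ≤ ∑' n, c ^ 2 * (2 * (P n ^ 2 + R n ^ 2)) := by
          apply ENNReal.tsum_le_tsum
          intro n
          rw [mul_pow]
          exact mul_le_mul_right (sq_add_le _ _) _
      _ = 2 * c ^ 2 * ((∑' n, P n ^ 2) + ∑' n, R n ^ 2) := by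
          rw [ENNReal.tsum_mul_left]
          conv_lhs => rw [show (fun n => 2 * (P n ^ 2 + R n ^ 2))
            = fun n => 2 * (P n ^ 2 + R n ^ 2) from rfl]
          rw [ENNReal.tsum_mul_left, ENNReal.tsum_add]
          ring
  -- Young bounds
  have hPy : ∑' n, P n ^ 2 ≤ (∑' m, A1 m ^ 2) * (∑' m, B0 m) ^ 2 := young A1 B0
  have hRy : ∑' n, R n ^ 2 ≤ (∑' m, B1 m ^ 2) * (∑' m, A0 m) ^ 2 := by
    have : ∀ n : Z3, R n = ∑' m, B1 m * A0 (n - m) := fun n => conv_comm A0 B1 n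
    calc ∑' n, R n ^ 2 = ∑' n, (∑' m, B1 m * A0 (n - m)) ^ 2 :=
          tsum_congr fun n => by rw [this n]
      _ ≤ _ := young B1 A0
  -- identification of norms
  have hA1n : ∑' m, A1 m ^ 2 = Ns s₁ a ^ 2 := by
    rw [Ns_sq]
    exact tsum_congr fun m => by rw [hA1, mul_pow, usq]
  have hB1n : ∑' m, B1 m ^ 2 = Ns s₁ b ^ 2 := by
    rw [Ns_sq]
    exact tsum_congr fun m => by rw [hB1, mul_pow, usq]
  have hB0n : (∑' m, B0 m) ^ 2 ≤ K * Ns s₂ b ^ 2 := by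
    have h := l1_le s₂ B0
    have h2 : (∑' m, B0 m) ^ 2
        ≤ (K ^ (1/2:ℝ) * (∑' m, ENNReal.ofReal (Q m ^ s₂) * B0 m ^ 2) ^ (1/2:ℝ)) ^ 2 :=
      pow_le_pow_left₀ (zero_le) h 2
    rw [mul_pow, half_sq, half_sq] at h2
    rw [Ns_sq]
    exact h2
  have hA0n : (∑' m, A0 m) ^ 2 ≤ K * Ns s₂ a ^ 2 := by
    have h := l1_le s₂ A0
    have h2 : (∑' m, A0 m) ^ 2
        ≤ (K ^ (1/2:ℝ) * (∑' m, ENNReal.ofReal (Q m ^ s₂) * A0 m ^ 2) ^ (1/2:ℝ)) ^ 2 :=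
      pow_le_pow_left₀ (zero_le) h 2
    rw [mul_pow, half_sq, half_sq] at h2
    rw [Ns_sq]
    exact h2
  -- constant bound
  have hconst : 2 * c ^ 2 * K ≤ ENNReal.ofReal (2 * 4 ^ s₁ * (K.toReal + 1)) := by
    rw [hcsq]
    calc 2 * ENNReal.ofReal (4 ^ s₁) * K
        = ENNReal.ofReal (2 * 4 ^ s₁) * K := by
          rw [ENNReal.ofReal_mul (by norm_num), ENNReal.ofReal_ofNat]
      _ ≤ ENNReal.ofReal (2 * 4 ^ s₁) * ENNReal.ofReal (K.toReal + 1) := by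
          apply mul_le_mul_right
          calc K = ENNReal.ofReal K.toReal := (ENNReal.ofReal_toReal hK.ne).symm
            _ ≤ ENNReal.ofReal (K.toReal + 1) := ENNReal.ofReal_le_ofReal (by linarith)
      _ = ENNReal.ofReal (2 * 4 ^ s₁ * (K.toReal + 1)) := by
          rw [← ENNReal.ofReal_mul (by positivity)]
  -- conclusion
  calc Ns s₁ (conv a b) ^ 2
      ≤ 2 * c ^ 2 * ((∑' n, P n ^ 2) + ∑' n, R n ^ 2) := hmain
    _ ≤ 2 * c ^ 2 * ((∑' m, A1 m ^ 2) * (∑' m, B0 m) ^ 2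
          + (∑' m, B1 m ^ 2) * (∑' m, A0 m) ^ 2) :=
        mul_le_mul_right (add_le_add hPy hRy) _
    _ ≤ 2 * c ^ 2 * (Ns s₁ a ^ 2 * (K * Ns s₂ b ^ 2) + Ns s₁ b ^ 2 * (K * Ns s₂ a ^ 2)) := by
        apply mul_le_mul_right
        apply add_le_add
        · rw [hA1n]; exact mul_le_mul_right hB0n _
        · rw [hB1n]; exact mul_le_mul_right hA0n _
    _ = (2 * c ^ 2 * K) * (Ns s₁ a ^ 2 * Ns s₂ b ^ 2 + Ns s₂ a ^ 2 * Ns s₁ b ^ 2) := by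
        ring
    _ ≤ ENNReal.ofReal (2 * 4 ^ s₁ * (K.toReal + 1))
          * (Ns s₁ a ^ 2 * Ns s₂ b ^ 2 + Ns s₂ a ^ 2 * Ns s₁ b ^ 2) :=
        mul_le_mul_left hconst _
end

section
/- For every $\alpha \in [0,1)$ there exists a constant $C = C(\alpha) > 0$ such that for every $a : \mathbb{Z}^3 \to \mathbb{C}^3$ with $a(0) = 0$, $\sum_{j=1}^3 n_j a_j(n) = 0$ for all $n \in \mathbb{Z}^3$, and $N_{3/2+\alpha}(a) < \infty$, the vector sequence $F : \mathbb{Z}^3 \to \mathbb{C}^3$ defined by $F(0) = 0$ and $F_j(n) = \sum_{k=1}^3 \big( \delta_{jk} - \tfrac{n_j n_k}{|n|^2} \big) \sum_{m=1}^3 i\, n_m \, (a_m * a_k)(n)$ for $n \ne 0$, satisfies $N_{\alpha - 1/2}(F) \le C \, N_{1/2}(a) \, N_{3/2+\alpha}(a)$. -/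
open scoped ENNReal NNReal BigOperators

namespace NSAux

open MeasureTheory

abbrev G := Fin 3 → ℤ

def q (n : G) : ℤ := ∑ i, (n i)^2

noncomputable def w (n : G) : ℝ≥0∞ := ENNReal.ofReal ((1:ℝ) + (q n : ℝ))

lemma q_nonneg (n : G) : 0 ≤ q n := Finset.sum_nonneg (fun i _ => sq_nonneg _)

lemma qcast (n : G) : ((q n : ℝ)) = ∑ i, ((n i:ℝ))^2 := by simp [q]

lemma w_pos_real (n : G) : (0:ℝ) < 1 + (q n : ℝ) := by
  have : (0:ℝ) ≤ (q n : ℝ) := by exact_mod_cast q_nonneg n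
  linarith

lemma one_le_w (n : G) : 1 ≤ w n := by
  rw [w, show (1:ℝ≥0∞) = ENNReal.ofReal 1 by simp]
  apply ENNReal.ofReal_le_ofReal
  have : (0:ℝ) ≤ (q n : ℝ) := by exact_mod_cast q_nonneg n
  linarith

lemma w_ne_zero (n : G) : w n ≠ 0 := by
  intro h
  have := one_le_w n
  rw [h] at this
  simp at this

lemma w_ne_top (n : G) : w n ≠ ⊤ := ENNReal.ofReal_ne_top

lemma rpow_two' (x : ℝ≥0∞) : x ^ (2:ℝ) = x ^ 2 := by
  rw [show (2:ℝ) = ((2:ℕ):ℝ) by norm_num, ENNReal.rpow_natCast]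

lemma tsum_cs {ι : Type*} [Countable ι] (f g : ι → ℝ≥0∞) :
    (∑' i, f i * g i) ≤ (∑' i, f i ^ 2) ^ (1/2:ℝ) * (∑' i, g i ^ 2) ^ (1/2:ℝ) := by
  letI : MeasurableSpace ι := ⊤
  haveI : MeasurableSingletonClass ι := ⟨fun _ => trivial⟩
  have hpq : (2:ℝ).HolderConjugate 2 := by constructor <;> norm_num
  have h := ENNReal.lintegral_mul_le_Lp_mul_Lq (Measure.count : Measure ι) hpq
    (measurable_of_countable f).aemeasurable (measurable_of_countable g).aemeasurable
  simp only [lintegral_count, rpow_two'] at h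
  exact h

lemma tsum_cs_sq {ι : Type*} [Countable ι] (f g : ι → ℝ≥0∞) :
    (∑' i, f i * g i)^2 ≤ (∑' i, f i ^ 2) * (∑' i, g i ^ 2) := by
  calc (∑' i, f i * g i)^2
      ≤ ((∑' i, f i ^ 2) ^ (1/2:ℝ) * (∑' i, g i ^ 2) ^ (1/2:ℝ))^2 :=
        pow_le_pow_left₀ zero_le (tsum_cs f g) 2
    _ = (∑' i, f i ^ 2) * (∑' i, g i ^ 2) := by
        rw [mul_pow, ← rpow_two', ← rpow_two', ← ENNReal.rpow_mul, ← ENNReal.rpow_mul]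
        norm_num

/-- telescoping 1D sum estimate -/
lemma nat1D (N : ℕ) : ∑ u ∈ Finset.range N, (1 + (u:ℝ)) ^ (-(1/3):ℝ) ≤ (3/2) * (N:ℝ) ^ ((2:ℝ)/3) := by
  have tele : ∑ u ∈ Finset.range N, (((u:ℝ)+1) ^ ((2:ℝ)/3) - ((u:ℝ)) ^ ((2:ℝ)/3)) = (N:ℝ) ^ ((2:ℝ)/3) - ((0:ℕ):ℝ) ^ ((2:ℝ)/3) := by
    have := Finset.sum_range_sub (f := fun u : ℕ => ((u:ℝ)) ^ ((2:ℝ)/3)) N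
    simpa using this
  have hterm : ∀ u ∈ Finset.range N, (1 + (u:ℝ)) ^ (-(1/3):ℝ) ≤ (3/2) * (((u:ℝ)+1) ^ ((2:ℝ)/3) - ((u:ℝ)) ^ ((2:ℝ)/3)) := by
    intro u _
    set x : ℝ := (u:ℝ) with hx
    have hx0 : 0 ≤ x := Nat.cast_nonneg u
    have hx1 : 0 < x + 1 := by linarith
    -- AM-GM : x^(2/3) * (x+1)^(1/3) ≤ x + 1/3
    have amgm : x ^ ((2:ℝ)/3) * (x+1) ^ ((1:ℝ)/3) ≤ (2/3) * x + (1/3) * (x+1) := by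
      have := Real.geom_mean_le_arith_mean2_weighted (by norm_num : (0:ℝ) ≤ 2/3)
        (by norm_num : (0:ℝ) ≤ 1/3) hx0 (le_of_lt hx1) (by norm_num)
      simpa [mul_comm] using this
    have key : x ^ ((2:ℝ)/3) ≤ (x + 1/3) * (x+1) ^ (-(1/3):ℝ) := by
      have h1 : x ^ ((2:ℝ)/3) = x ^ ((2:ℝ)/3) * (x+1) ^ ((1:ℝ)/3) * (x+1) ^ (-(1/3):ℝ) := by
        rw [mul_assoc, ← Real.rpow_add hx1]
        norm_num
      rw [h1]
      have hpow : (0:ℝ) ≤ (x+1) ^ (-(1/3):ℝ) := Real.rpow_nonneg (le_of_lt hx1) _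
      have : x ^ ((2:ℝ)/3) * (x+1) ^ ((1:ℝ)/3) ≤ x + 1/3 := by linarith [amgm]
      exact mul_le_mul_of_nonneg_right this hpow
    have expand : (x+1) ^ ((2:ℝ)/3) = (x+1) * (x+1) ^ (-(1/3):ℝ) := by
      nth_rewrite 2 [← Real.rpow_one (x+1)]
      rw [← Real.rpow_add hx1]
      norm_num
    have hpow : (0:ℝ) ≤ (x+1) ^ (-(1/3):ℝ) := Real.rpow_nonneg (le_of_lt hx1) _
    have : (x+1) ^ ((2:ℝ)/3) - x ^ ((2:ℝ)/3) ≥ (2/3) * (x+1) ^ (-(1/3):ℝ) := by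
      rw [expand]
      nlinarith [key]
    have hone : (1 + x) ^ (-(1/3):ℝ) = (x+1) ^ (-(1/3):ℝ) := by ring_nf
    rw [hone]
    linarith
  calc ∑ u ∈ Finset.range N, (1 + (u:ℝ)) ^ (-(1/3):ℝ)
      ≤ ∑ u ∈ Finset.range N, (3/2) * (((u:ℝ)+1) ^ ((2:ℝ)/3) - ((u:ℝ)) ^ ((2:ℝ)/3)) :=
        Finset.sum_le_sum hterm
    _ = (3/2) * ((N:ℝ) ^ ((2:ℝ)/3) - ((0:ℕ):ℝ) ^ ((2:ℝ)/3)) := by rw [← Finset.mul_sum, tele]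
    _ ≤ (3/2) * (N:ℝ) ^ ((2:ℝ)/3) := by
        have : ((0:ℕ):ℝ) ^ ((2:ℝ)/3) = 0 := by
          rw [Nat.cast_zero]
          exact Real.zero_rpow (by norm_num)
        rw [this]; ring_nf; exact le_refl _

/-- The 1D lattice sum estimate. -/
lemma oneD {K : ℝ} (hK : 0 ≤ K) :
    ∑' t : ℤ, (if (t:ℝ)^2 ≤ K then ENNReal.ofReal ((1 + (t:ℝ)^2) ^ (-(1/6):ℝ)) else 0)
      ≤ ENNReal.ofReal (12 * (1+K) ^ ((1:ℝ)/3)) := by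
  set R : ℕ := ⌊Real.sqrt K⌋₊ with hR
  set f : ℤ → ℝ≥0∞ := fun t => (if (t:ℝ)^2 ≤ K then ENNReal.ofReal ((1 + (t:ℝ)^2) ^ (-(1/6):ℝ)) else 0) with hf
  -- support in Icc (-R) R
  have hsupp : ∀ t : ℤ, t ∉ Finset.Icc (-(R:ℤ)) (R:ℤ) → f t = 0 := by
    intro t ht
    simp only [hf]
    rw [if_neg]
    intro hc
    apply ht
    have habs : (t.natAbs : ℝ) ≤ Real.sqrt K := by
      rw [show ((t.natAbs : ℝ)) = |(t:ℝ)| by simp [Nat.cast_natAbs]]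
      have := Real.sqrt_le_sqrt hc
      rwa [Real.sqrt_sq_eq_abs] at this
    have : t.natAbs ≤ R := Nat.le_floor habs
    simp only [Finset.mem_Icc]
    omega
  rw [tsum_eq_sum hsupp]
  -- bound each term by g(natAbs)
  set g : ℕ → ℝ≥0∞ := fun u => ENNReal.ofReal (2 * (1 + (u:ℝ)) ^ (-(1/3):ℝ)) with hg
  have hterm : ∀ t : ℤ, f t ≤ g t.natAbs := by
    intro t
    simp only [hf, hg]
    split
    · apply ENNReal.ofReal_le_ofReal
      set u : ℝ := (t.natAbs : ℝ) with hu
      have hu0 : 0 ≤ u := Nat.cast_nonneg _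
      have ht2 : (t:ℝ)^2 = u^2 := by
        rw [hu, Nat.cast_natAbs]; push_cast; rw [sq_abs]
      rw [ht2]
      have h1 : (1+u)^2 ≤ 2 * (1 + u^2) := by nlinarith [sq_nonneg (1-u)]
      have h2 : (1 + u^2) ^ (-(1/6):ℝ) ≤ ((1+u)^2 / 2) ^ (-(1/6):ℝ) := by
        apply Real.rpow_le_rpow_of_nonpos (by positivity) (by linarith) (by norm_num)
      refine h2.trans ?_
      rw [Real.div_rpow (by positivity) (by norm_num)]
      have e1 : (((1+u)^2 : ℝ)) ^ (-(1/6):ℝ) = (1+u) ^ (-(1/3):ℝ) := by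
        rw [← Real.rpow_natCast (1+u) 2, ← Real.rpow_mul (by linarith)]
        norm_num
      rw [e1, div_le_iff₀ (by positivity)]
      have e2 : (2:ℝ) * (1+u) ^ (-(1/3):ℝ) * (2:ℝ) ^ (-(1/6):ℝ) =
          (1+u) ^ (-(1/3):ℝ) * (2 * (2:ℝ) ^ (-(1/6):ℝ)) := by ring
      rw [e2]
      have h3 : (1:ℝ) ≤ 2 * (2:ℝ) ^ (-(1/6):ℝ) := by
        rw [show (2:ℝ) * (2:ℝ) ^ (-(1/6):ℝ) = (2:ℝ) ^ (1 + -(1/6):ℝ) by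
          rw [Real.rpow_add (by norm_num), Real.rpow_one]]
        have := Real.one_le_rpow (by norm_num : (1:ℝ) ≤ 2) (by norm_num : (0:ℝ) ≤ 1 + -(1/6))
        simpa using this
      nlinarith [Real.rpow_nonneg (show (0:ℝ) ≤ 1+u by linarith) (-(1/3):ℝ)]
    · exact zero_le
  -- Icc ⊆ union of two images
  have hsub : Finset.Icc (-(R:ℤ)) (R:ℤ) ⊆
      (Finset.range (R+1)).image (fun u : ℕ => (u:ℤ)) ∪
      (Finset.range (R+1)).image (fun u : ℕ => -(u:ℤ)) := by
    intro t ht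
    simp only [Finset.mem_Icc] at ht
    simp only [Finset.mem_union, Finset.mem_image, Finset.mem_range]
    rcases le_or_gt 0 t with h | h
    · exact Or.inl ⟨t.toNat, by omega, by omega⟩
    · exact Or.inr ⟨t.natAbs, by omega, by omega⟩
  calc ∑ t ∈ Finset.Icc (-(R:ℤ)) (R:ℤ), f t
      ≤ ∑ t ∈ Finset.Icc (-(R:ℤ)) (R:ℤ), g t.natAbs := Finset.sum_le_sum (fun t _ => hterm t)
    _ ≤ ∑ t ∈ ((Finset.range (R+1)).image (fun u : ℕ => (u:ℤ)) ∪
          (Finset.range (R+1)).image (fun u : ℕ => -(u:ℤ))), g t.natAbs :=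
        Finset.sum_le_sum_of_subset hsub
    _ ≤ (∑ t ∈ (Finset.range (R+1)).image (fun u : ℕ => (u:ℤ)), g t.natAbs) +
        (∑ t ∈ (Finset.range (R+1)).image (fun u : ℕ => -(u:ℤ)), g t.natAbs) := by
        rw [← Finset.sum_union_inter]
        exact le_self_add
    _ = (∑ u ∈ Finset.range (R+1), g u) + (∑ u ∈ Finset.range (R+1), g u) := by
        rw [Finset.sum_image (by intro a _ b _ h; simp only at h; omega),
            Finset.sum_image (by intro a _ b _ h; simp only at h; omega)]
        simp
    _ ≤ ENNReal.ofReal (12 * (1+K) ^ ((1:ℝ)/3)) := by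
        have hsum : ∑ u ∈ Finset.range (R+1), g u =
            ENNReal.ofReal (∑ u ∈ Finset.range (R+1), 2 * (1 + (u:ℝ)) ^ (-(1/3):ℝ)) := by
          rw [ENNReal.ofReal_sum_of_nonneg]
          intro i _
          positivity
        rw [hsum, ← ENNReal.ofReal_add (by positivity) (by positivity)]
        apply ENNReal.ofReal_le_ofReal
        have h1 := nat1D (R+1)
        have hRK : ((R:ℝ)+1)^2 ≤ 2 * (1+K) := by
          have h2 : (R:ℝ) ≤ Real.sqrt K := Nat.floor_le (Real.sqrt_nonneg K)
          have h3 : Real.sqrt K ^ 2 = K := Real.sq_sqrt hK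
          nlinarith [sq_nonneg (Real.sqrt K - 1), Real.sqrt_nonneg K]
        have h4 : (((R:ℕ)+1:ℕ):ℝ) ^ ((2:ℝ)/3) ≤ 2 * (1+K) ^ ((1:ℝ)/3) := by
          push_cast
          have e1 : ((R:ℝ)+1) ^ ((2:ℝ)/3) = (((R:ℝ)+1)^2) ^ ((1:ℝ)/3) := by
            rw [← Real.rpow_natCast ((R:ℝ)+1) 2, ← Real.rpow_mul (by positivity)]
            norm_num
          rw [e1]
          calc (((R:ℝ)+1)^2) ^ ((1:ℝ)/3) ≤ (2*(1+K)) ^ ((1:ℝ)/3) :=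
                Real.rpow_le_rpow (by positivity) hRK (by norm_num)
            _ = 2 ^ ((1:ℝ)/3) * (1+K) ^ ((1:ℝ)/3) :=
                Real.mul_rpow (by norm_num) (by linarith)
            _ ≤ 2 * (1+K) ^ ((1:ℝ)/3) := by
                have : (2:ℝ) ^ ((1:ℝ)/3) ≤ 2 := by
                  calc (2:ℝ) ^ ((1:ℝ)/3) ≤ (2:ℝ) ^ (1:ℝ) :=
                    Real.rpow_le_rpow_of_exponent_le (by norm_num) (by norm_num)
                  _ = 2 := Real.rpow_one 2
                have h0 : (0:ℝ) ≤ (1+K) ^ ((1:ℝ)/3) := Real.rpow_nonneg (by linarith) _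
                nlinarith
        have hS : ∑ u ∈ Finset.range (R+1), 2 * (1+(u:ℝ))^(-(1/3):ℝ)
            ≤ 3 * (((R+1):ℕ):ℝ) ^ ((2:ℝ)/3) := by
          rw [← Finset.mul_sum]
          push_cast
          push_cast at h1
          nlinarith [h1]
        linarith [h4, hS]


/-- equivalence `G ≃ ℤ × ℤ × ℤ` -/
def e3 : ℤ × ℤ × ℤ ≃ G where
  toFun p := ![p.1, p.2.1, p.2.2]
  invFun m := (m 0, m 1, m 2)
  left_inv p := by simp
  right_inv m := by
    funext i
    fin_cases i <;> simp

/-- The 3D lattice sum estimate. -/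
lemma lat3D (k : G) :
    ∑' m : G, (if q m ≤ q k then w m ^ (-(1/2):ℝ) else 0) ≤ ENNReal.ofReal 1728 * w k := by
  set K : ℝ := (q k : ℝ) with hKdef
  have hK : 0 ≤ K := by rw [hKdef]; exact_mod_cast q_nonneg k
  set u : ℤ → ℝ≥0∞ := fun t => if (t:ℝ)^2 ≤ K then ENNReal.ofReal ((1 + (t:ℝ)^2) ^ (-(1/6):ℝ)) else 0 with hu
  -- termwise bound
  have claim1 : ∀ m : G, (if q m ≤ q k then w m ^ (-(1/2):ℝ) else 0) ≤ u (m 0) * (u (m 1) * u (m 2)) := by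
    intro m
    split
    case isFalse => exact zero_le
    case isTrue hqm =>
      have hcoord : ∀ i : Fin 3, ((m i : ℝ))^2 ≤ K := by
        intro i
        have h1 : (m i)^2 ≤ q m := Finset.single_le_sum (f := fun j => (m j)^2)
          (fun j _ => sq_nonneg _) (Finset.mem_univ i)
        have : (m i)^2 ≤ q k := le_trans h1 hqm
        rw [hKdef]
        exact_mod_cast this
      have hbranch : ∀ i : Fin 3, u (m i) = ENNReal.ofReal ((1 + ((m i:ℝ))^2) ^ (-(1/6):ℝ)) := by
        intro i; rw [hu]; simp only [if_pos (hcoord i)]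
      rw [hbranch 0, hbranch 1, hbranch 2]
      rw [← ENNReal.ofReal_mul (by positivity), ← ENNReal.ofReal_mul (by positivity)]
      have hw : w m ^ (-(1/2):ℝ) = ENNReal.ofReal ((1 + (q m:ℝ)) ^ (-(1/2):ℝ)) := by
        rw [w, ← ENNReal.ofReal_rpow_of_pos (w_pos_real m)]
      rw [hw]
      apply ENNReal.ofReal_le_ofReal
      -- real inequality
      set P0 : ℝ := 1 + ((m 0:ℝ))^2
      set P1 : ℝ := 1 + ((m 1:ℝ))^2
      set P2 : ℝ := 1 + ((m 2:ℝ))^2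
      set X : ℝ := 1 + (q m : ℝ) with hX
      have hq : (q m : ℝ) = ((m 0:ℝ))^2 + ((m 1:ℝ))^2 + ((m 2:ℝ))^2 := by
        rw [qcast]; rw [Fin.sum_univ_three]
      have hP0 : (1:ℝ) ≤ P0 := by simp [P0]; positivity
      have hP1 : (1:ℝ) ≤ P1 := by simp [P1]; positivity
      have hP2 : (1:ℝ) ≤ P2 := by simp [P2]; positivity
      have hP0X : P0 ≤ X := by simp [P0, hX, hq]; nlinarith [sq_nonneg ((m 1:ℝ)), sq_nonneg ((m 2:ℝ))]
      have hP1X : P1 ≤ X := by simp [P1, hX, hq]; nlinarith [sq_nonneg ((m 0:ℝ)), sq_nonneg ((m 2:ℝ))]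
      have hP2X : P2 ≤ X := by simp [P2, hX, hq]; nlinarith [sq_nonneg ((m 0:ℝ)), sq_nonneg ((m 1:ℝ))]
      have hXpos : (0:ℝ) < X := by rw [hX]; exact w_pos_real m
      have hprod : P0 * P1 * P2 ≤ X^3 := by
        have h01 : P0*P1 ≤ X*X := mul_le_mul hP0X hP1X (by linarith) (by linarith)
        have h012 : P0*P1*P2 ≤ (X*X)*X := mul_le_mul h01 hP2X (by linarith) (by positivity)
        nlinarith [h012]
      have e1 : X ^ (-(1/2):ℝ) = (X^3) ^ (-(1/6):ℝ) := by
        rw [← Real.rpow_natCast X 3, ← Real.rpow_mul (le_of_lt hXpos)]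
        norm_num
      rw [e1]
      have e2 : (X^3) ^ (-(1/6):ℝ) ≤ (P0 * P1 * P2) ^ (-(1/6):ℝ) :=
        Real.rpow_le_rpow_of_nonpos (by positivity) hprod (by norm_num)
      refine e2.trans ?_
      rw [Real.mul_rpow (by positivity) (by positivity),
          Real.mul_rpow (by positivity) (by positivity)]
      ring_nf
      exact le_refl _
  -- sum the product bound
  calc ∑' m : G, (if q m ≤ q k then w m ^ (-(1/2):ℝ) else 0)
      ≤ ∑' m : G, u (m 0) * (u (m 1) * u (m 2)) := ENNReal.tsum_le_tsum claim1
    _ = (∑' t, u t) * ((∑' t, u t) * (∑' t, u t)) := by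
        rw [← Equiv.tsum_eq e3 (fun m => u (m 0) * (u (m 1) * u (m 2)))]
        have : ∀ p : ℤ × ℤ × ℤ, u (e3 p 0) * (u (e3 p 1) * u (e3 p 2)) =
            u p.1 * (u p.2.1 * u p.2.2) := by
          intro p; simp [e3]
        rw [tsum_congr this]
        rw [ENNReal.tsum_prod']
        simp_rw [ENNReal.tsum_prod', ENNReal.tsum_mul_left]
        rw [ENNReal.tsum_mul_right, ENNReal.tsum_mul_right]
    _ ≤ ENNReal.ofReal (12 * (1+K) ^ ((1:ℝ)/3)) * (ENNReal.ofReal (12 * (1+K) ^ ((1:ℝ)/3)) *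
          ENNReal.ofReal (12 * (1+K) ^ ((1:ℝ)/3))) := by
        have h := oneD hK
        exact mul_le_mul' h (mul_le_mul' h h)
    _ = ENNReal.ofReal (12 * (1+K) ^ ((1:ℝ)/3) * (12 * (1+K) ^ ((1:ℝ)/3) * (12 * (1+K) ^ ((1:ℝ)/3)))) := by
        rw [← ENNReal.ofReal_mul (by positivity), ← ENNReal.ofReal_mul (by positivity)]
    _ ≤ ENNReal.ofReal 1728 * w k := by
        rw [w, ← ENNReal.ofReal_mul (by norm_num)]
        apply ENNReal.ofReal_le_ofReal
        have e4 : (1+K) ^ ((1:ℝ)/3) * ((1+K) ^ ((1:ℝ)/3) * (1+K) ^ ((1:ℝ)/3)) = 1+K := by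
          rw [← Real.rpow_add (by linarith), ← Real.rpow_add (by linarith)]
          norm_num
        calc 12 * (1+K) ^ ((1:ℝ)/3) * (12 * (1+K) ^ ((1:ℝ)/3) * (12 * (1+K) ^ ((1:ℝ)/3)))
            = 1728 * ((1+K) ^ ((1:ℝ)/3) * ((1+K) ^ ((1:ℝ)/3) * (1+K) ^ ((1:ℝ)/3))) := by ring
          _ = 1728 * (1+K) := by rw [e4]
          _ ≤ 1728 * (1 + (q k:ℝ)) := le_of_eq (by rw [hKdef])

/-- The core bilinear convolution estimate. -/
lemma core {s : ℝ} (hs0 : 0 ≤ s) (hs : s ≤ 3/2) (h : G → ℝ≥0∞) :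
    ∑' n : G, w n ^ s * (∑' m : G, h m * h (n - m))^2
      ≤ 55296 * ((∑' n : G, w n ^ ((1:ℝ)/2) * h n ^ 2) * (∑' n : G, w n ^ (s+1) * h n ^ 2)) := by
  set A := ∑' n : G, w n ^ ((1:ℝ)/2) * h n ^ 2 with hA
  set B := ∑' n : G, w n ^ (s+1) * h n ^ 2 with hB
  set P : G → ℝ≥0∞ := fun n => ∑' m : G, if q m ≤ q (n - m) then h m * h (n - m) else 0 with hPdef
  set T : G → ℝ≥0∞ := fun n =>
    ∑' m : G, if q m ≤ q (n - m) then w m ^ (-(1/2):ℝ) * h (n-m)^2 else 0 with hTdef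
  set U : G → ℝ≥0∞ := fun n =>
    ∑' m : G, if q m ≤ q (n - m) then w m ^ (-(1/2):ℝ) * (w (n-m) ^ s * h (n-m)^2) else 0 with hUdef
  -- Step 1 : convolution ≤ 2 P n
  have step1 : ∀ n : G, (∑' m : G, h m * h (n-m)) ≤ 2 * P n := by
    intro n
    set gQ : G → ℝ≥0∞ := fun m => if q m ≤ q (n - m) then 0 else h m * h (n - m) with hgQ
    have hsplit : ∀ m : G, h m * h (n-m) =
        (if q m ≤ q (n-m) then h m * h (n-m) else 0) + gQ m := by
      intro m; rw [hgQ]; by_cases hc : q m ≤ q (n - m) <;> simp [hc]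
    have hQle : (∑' m : G, gQ m) ≤ P n := by
      have hre : (∑' m : G, gQ m) = ∑' x : G, gQ (n - x) := by
        exact (Equiv.tsum_eq (Equiv.subLeft n) gQ).symm
      rw [hre]
      apply ENNReal.tsum_le_tsum
      intro x
      simp only [hgQ, hPdef, sub_sub_cancel]
      by_cases hc : q (n - x) ≤ q x
      · rw [if_pos hc]; exact zero_le
      · rw [if_neg hc, if_pos (le_of_lt (lt_of_not_ge hc)), mul_comm]
    calc (∑' m : G, h m * h (n-m)) = P n + ∑' m : G, gQ m := by
          rw [hPdef, ← ENNReal.tsum_add]; exact tsum_congr hsplit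
      _ ≤ P n + P n := add_le_add le_rfl hQle
      _ = 2 * P n := (two_mul _).symm
  -- Step 2 : Cauchy-Schwarz
  have step2 : ∀ n : G, P n ^ 2 ≤ A * T n := by
    intro n
    set f : G → ℝ≥0∞ := fun m => w m ^ ((1:ℝ)/4) * h m with hfd
    set g : G → ℝ≥0∞ := fun m => if q m ≤ q (n - m) then w m ^ (-(1/4):ℝ) * h (n-m) else 0 with hgd
    have hfg : ∀ m : G, (if q m ≤ q (n-m) then h m * h (n-m) else 0) = f m * g m := by
      intro m
      by_cases hc : q m ≤ q (n-m)
      · rw [if_pos hc]; simp only [hfd, hgd, if_pos hc]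
        rw [mul_mul_mul_comm, ← ENNReal.rpow_add _ _ (w_ne_zero m) (w_ne_top m)]
        norm_num
      · rw [if_neg hc]; simp only [hfd, hgd, if_neg hc, mul_zero]
    have hf2 : ∀ m : G, f m ^ 2 = w m ^ ((1:ℝ)/2) * h m ^ 2 := by
      intro m; simp only [hfd]
      rw [mul_pow, ← rpow_two', ← ENNReal.rpow_mul]; norm_num
    have hg2 : ∀ m : G, g m ^ 2 =
        (if q m ≤ q (n-m) then w m ^ (-(1/2):ℝ) * h (n-m) ^ 2 else 0) := by
      intro m; simp only [hgd]
      by_cases hc : q m ≤ q (n-m)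
      · rw [if_pos hc, if_pos hc, mul_pow, ← rpow_two', ← ENNReal.rpow_mul]; norm_num
      · rw [if_neg hc, if_neg hc]; simp
    calc P n ^ 2 = (∑' m : G, f m * g m)^2 := by rw [hPdef]; exact congrArg (·^2) (tsum_congr hfg)
      _ ≤ (∑' m : G, f m ^ 2) * (∑' m : G, g m ^ 2) := tsum_cs_sq f g
      _ = A * T n := by rw [tsum_congr hf2, tsum_congr hg2]
  -- Step 3 : weight transfer
  have step3 : ∀ n : G, w n ^ s * T n ≤ 8 * U n := by
    intro n
    rw [hTdef, hUdef, ← ENNReal.tsum_mul_left, ← ENNReal.tsum_mul_left]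
    apply ENNReal.tsum_le_tsum
    intro m
    by_cases hc : q m ≤ q (n - m)
    · rw [if_pos hc, if_pos hc]
      have hwn : w n ≤ 4 * w (n - m) := by
        rw [w, w, show (4:ℝ≥0∞) = ENNReal.ofReal 4 from (by norm_num),
          ← ENNReal.ofReal_mul (by norm_num)]
        apply ENNReal.ofReal_le_ofReal
        have hZ : q n ≤ 2 * q m + 2 * q (n - m) := by
          have : ∀ i : Fin 3, (n i)^2 ≤ 2 * (m i)^2 + 2 * ((n-m) i)^2 := by
            intro i
            have : (n:G) i = m i + (n - m) i := by simp
            rw [this]; nlinarith [sq_nonneg (m i - (n-m) i)]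
          calc q n = ∑ i, (n i)^2 := rfl
            _ ≤ ∑ i, (2 * (m i)^2 + 2 * ((n-m) i)^2) := Finset.sum_le_sum (fun i _ => this i)
            _ = 2 * q m + 2 * q (n-m) := by rw [Finset.sum_add_distrib, ← Finset.mul_sum, ← Finset.mul_sum]; rfl
        have hq4 : (q n : ℝ) ≤ 2*(q m:ℝ) + 2*(q (n-m):ℝ) := by exact_mod_cast hZ
        have hmm : (q m : ℝ) ≤ (q (n-m) : ℝ) := by exact_mod_cast hc
        linarith
      have h48 : (4:ℝ≥0∞) ^ s ≤ 8 := by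
        calc (4:ℝ≥0∞) ^ s ≤ (4:ℝ≥0∞) ^ ((3:ℝ)/2) :=
              ENNReal.rpow_le_rpow_of_exponent_le (by norm_num) hs
          _ = 8 := by
              rw [show (4:ℝ≥0∞) = (2:ℝ≥0∞)^(2:ℝ) by rw [rpow_two']; norm_num,
                ← ENNReal.rpow_mul,
                show (2:ℝ)*((3:ℝ)/2) = ((3:ℕ):ℝ) by norm_num, ENNReal.rpow_natCast]
              norm_num
      have hwns : w n ^ s ≤ 8 * w (n - m) ^ s := by
        calc w n ^ s ≤ (4 * w (n-m)) ^ s := ENNReal.rpow_le_rpow hwn hs0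
          _ = 4 ^ s * w (n-m) ^ s := ENNReal.mul_rpow_of_nonneg _ _ hs0
          _ ≤ 8 * w (n-m) ^ s := mul_le_mul_left h48 _
      calc w n ^ s * (w m ^ (-(1/2):ℝ) * h (n-m)^2)
          = w m ^ (-(1/2):ℝ) * h (n-m)^2 * w n ^ s := by ring
        _ ≤ w m ^ (-(1/2):ℝ) * h (n-m)^2 * (8 * w (n-m) ^ s) := mul_le_mul_right hwns _
        _ = 8 * (w m ^ (-(1/2):ℝ) * (w (n-m) ^ s * h (n-m)^2)) := by ring
    · rw [if_neg hc, if_neg hc]; simp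
  -- Step 4 : Fubini + lattice estimate
  have step4 : ∑' n : G, U n ≤ ENNReal.ofReal 1728 * B := by
    rw [hUdef, ENNReal.tsum_comm]
    have hin : ∀ m : G, (∑' n : G, if q m ≤ q (n - m) then
        w m ^ (-(1/2):ℝ) * (w (n-m) ^ s * h (n-m)^2) else 0)
        = ∑' k : G, (if q m ≤ q k then w m ^ (-(1/2):ℝ) * (w k ^ s * h k^2) else 0) := by
      intro m
      rw [← Equiv.tsum_eq (Equiv.addRight m)
        (fun n => if q m ≤ q (n - m) then w m ^ (-(1/2):ℝ) * (w (n-m) ^ s * h (n-m)^2) else 0)]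
      apply tsum_congr; intro k
      simp [Equiv.addRight, add_sub_cancel_right]
    rw [tsum_congr hin, ENNReal.tsum_comm]
    have hout : ∀ k : G, (∑' m : G, if q m ≤ q k then w m ^ (-(1/2):ℝ) * (w k ^ s * h k^2) else 0)
        = (w k ^ s * h k ^ 2) * ∑' m : G, (if q m ≤ q k then w m ^ (-(1/2):ℝ) else 0) := by
      intro k
      rw [← ENNReal.tsum_mul_left]
      apply tsum_congr; intro m
      split
      · ring
      · simp
    rw [tsum_congr hout]
    calc ∑' k : G, (w k ^ s * h k ^ 2) * (∑' m : G, (if q m ≤ q k then w m ^ (-(1/2):ℝ) else 0))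
        ≤ ∑' k : G, (w k ^ s * h k ^ 2) * (ENNReal.ofReal 1728 * w k) :=
          ENNReal.tsum_le_tsum (fun k => mul_le_mul_right (lat3D k) _)
      _ = ENNReal.ofReal 1728 * B := by
          rw [hB, ← ENNReal.tsum_mul_left]
          apply tsum_congr; intro k
          rw [ENNReal.rpow_add s 1 (w_ne_zero k) (w_ne_top k), ENNReal.rpow_one]
          ring
  -- Assemble
  have hof : ENNReal.ofReal 1728 = (1728:ℝ≥0∞) := by
    rw [show (1728:ℝ) = ((1728:ℕ):ℝ) by norm_num, ENNReal.ofReal_natCast]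
    norm_num
  calc ∑' n : G, w n ^ s * (∑' m : G, h m * h (n - m))^2
      ≤ ∑' n : G, w n ^ s * (2 * P n)^2 :=
        ENNReal.tsum_le_tsum (fun n =>
          mul_le_mul_right (pow_le_pow_left₀ zero_le (step1 n) 2) _)
    _ = ∑' n : G, 4 * (w n ^ s * P n ^ 2) := tsum_congr (fun n => by rw [mul_pow]; ring)
    _ ≤ ∑' n : G, 4 * (w n ^ s * (A * T n)) :=
        ENNReal.tsum_le_tsum (fun n => mul_le_mul_right (mul_le_mul_right (step2 n) _) _)
    _ = (4 * A) * ∑' n : G, w n ^ s * T n := by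
        rw [← ENNReal.tsum_mul_left]; exact tsum_congr (fun n => by ring)
    _ ≤ (4 * A) * ∑' n : G, 8 * U n :=
        mul_le_mul_right (ENNReal.tsum_le_tsum step3) _
    _ = (4 * A) * (8 * ∑' n : G, U n) := by rw [ENNReal.tsum_mul_left]
    _ ≤ (4 * A) * (8 * (ENNReal.ofReal 1728 * B)) :=
        mul_le_mul_right (mul_le_mul_right step4 _) _
    _ = 55296 * (A * B) := by rw [hof]; ring

lemma enorm_tsum_le' {ι : Type*} [Countable ι] (f : ι → ℂ) :
    (‖∑' i, f i‖₊ : ℝ≥0∞) ≤ ∑' i, (‖f i‖₊ : ℝ≥0∞) := by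
  by_cases htop : (∑' i, (‖f i‖₊ : ℝ≥0∞)) = ⊤
  · rw [htop]; exact le_top
  · have hsn : Summable (fun i => ‖f i‖₊) := ENNReal.tsum_coe_ne_top_iff_summable.mp htop
    have hsf : Summable f := by
      apply Summable.of_nnnorm hsn
    rw [← ENNReal.coe_tsum hsn]
    exact_mod_cast nnnorm_tsum_le hsn

lemma coord_le (x : EuclideanSpace ℂ (Fin 3)) (j : Fin 3) : ‖x j‖ ≤ ‖x‖ := by
  rw [EuclideanSpace.norm_eq]
  rw [show ‖x j‖ = Real.sqrt (‖x j‖^2) from (Real.sqrt_sq (norm_nonneg _)).symm]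
  apply Real.sqrt_le_sqrt
  exact Finset.single_le_sum (f := fun i => ‖x i‖^2) (fun i _ => sq_nonneg _) (Finset.mem_univ j)

lemma norm_le_sum_coord (x : EuclideanSpace ℂ (Fin 3)) : ‖x‖ ≤ ∑ j, ‖x j‖ := by
  rw [EuclideanSpace.norm_eq]
  rw [show (∑ j, ‖x j‖) = Real.sqrt ((∑ j, ‖x j‖)^2) from
    (Real.sqrt_sq (Finset.sum_nonneg fun i _ => norm_nonneg _)).symm]
  apply Real.sqrt_le_sqrt
  have : ∀ j : Fin 3, ‖x j‖^2 ≤ ‖x j‖ * ∑ i, ‖x i‖ := by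
    intro j
    rw [sq]
    exact mul_le_mul_of_nonneg_left
      (Finset.single_le_sum (f := fun i => ‖x i‖) (fun i _ => norm_nonneg _) (Finset.mem_univ j))
      (norm_nonneg _)
  calc ∑ j, ‖x j‖^2 ≤ ∑ j, ‖x j‖ * ∑ i, ‖x i‖ := Finset.sum_le_sum (fun j _ => this j)
    _ = (∑ j, ‖x j‖)^2 := by rw [← Finset.sum_mul, sq]

lemma le_rpow_half {x y : ℝ≥0∞} (h : x^2 ≤ y) : x ≤ y ^ ((1:ℝ)/2) := by
  have h2 := ENNReal.rpow_le_rpow (x := x^2) (y := y) ?_ (by norm_num : (0:ℝ) ≤ 1/2)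
  · rwa [show ((x^2 : ℝ≥0∞)) = x ^ (2:ℝ) by rw [show (2:ℝ) = ((2:ℕ):ℝ) by norm_num, ENNReal.rpow_natCast],
      ← ENNReal.rpow_mul, show (2:ℝ)*(1/2) = 1 by norm_num, ENNReal.rpow_one] at h2
  · exact h

lemma Ns_eq {E : Type*} [NormedAddCommGroup E] (s : ℝ) (a : G → E) :
    Ns s a = (∑' n : G, w n ^ s * ((‖a n‖₊ : ℝ≥0∞)) ^ 2) ^ ((1:ℝ)/2) := by
  rw [Ns]
  norm_num
  congr 1
  apply tsum_congr
  intro n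
  rw [show (1 + ∑ i, ((n i:ℝ))^2) = 1 + (q n : ℝ) by rw [qcast],
    ENNReal.ofReal_mul (Real.rpow_nonneg (le_of_lt (w_pos_real n)) s), w,
    ENNReal.ofReal_rpow_of_pos (w_pos_real n),
    ENNReal.ofReal_pow (norm_nonneg _), ofReal_norm, enorm_eq_nnnorm]

lemma coeff_bound (n : G) (hn : n ≠ 0) (j k : Fin 3) :
    ‖((if j = k then 1 else 0) : ℂ) - (n j : ℂ) * (n k : ℂ) / ((q n : ℤ) : ℂ)‖ ≤ 2 := by
  have hq1 : 1 ≤ q n := by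
    have : ∃ i, n i ≠ 0 := by
      by_contra hc
      push_neg at hc
      exact hn (funext hc)
    obtain ⟨i, hi⟩ := this
    have h1 : 1 ≤ (n i)^2 := by nlinarith [sq_nonneg (n i), Int.one_le_abs hi, sq_abs (n i)]
    calc (1:ℤ) ≤ (n i)^2 := h1
      _ ≤ q n := Finset.single_le_sum (f := fun i => (n i)^2) (fun i _ => sq_nonneg _)
          (Finset.mem_univ i)
  have habs : |n j * n k| ≤ q n := by
    have h1 : (n j)^2 ≤ q n := Finset.single_le_sum (f := fun i => (n i)^2)
      (fun i _ => sq_nonneg _) (Finset.mem_univ j)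
    have h2 : (n k)^2 ≤ q n := Finset.single_le_sum (f := fun i => (n i)^2)
      (fun i _ => sq_nonneg _) (Finset.mem_univ k)
    have h3 : (n j * n k)^2 ≤ (q n)^2 := by nlinarith [sq_nonneg (n j), sq_nonneg (n k)]
    nlinarith [abs_nonneg (n j * n k), sq_abs (n j * n k), q_nonneg n]
  have hdiv : ‖(n j : ℂ) * (n k : ℂ) / ((q n : ℤ) : ℂ)‖ ≤ 1 := by
    rw [show ((n j : ℂ)) * (n k : ℂ) = (((n j * n k : ℤ)) : ℂ) by push_cast; ring]
    rw [norm_div]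
    rw [Complex.norm_intCast, Complex.norm_intCast]
    have hq0 : (0:ℝ) < |((q n : ℤ):ℝ)| := by
      have h1 : (1:ℝ) ≤ ((q n:ℤ):ℝ) := by exact_mod_cast hq1
      rw [abs_of_pos (by linarith)]; linarith
    rw [div_le_one hq0]
    calc |(((n j * n k:ℤ)):ℝ)| = ((|n j * n k|:ℤ):ℝ) := by rw [Int.cast_abs]
      _ ≤ ((q n:ℤ):ℝ) := by exact_mod_cast habs
      _ = |((q n:ℤ):ℝ)| := by
          rw [abs_of_nonneg]
          exact_mod_cast q_nonneg n
  calc ‖((if j = k then 1 else 0) : ℂ) - (n j : ℂ) * (n k : ℂ) / ((q n : ℤ) : ℂ)‖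
      ≤ ‖((if j = k then 1 else 0) : ℂ)‖ + ‖(n j : ℂ) * (n k : ℂ) / ((q n : ℤ) : ℂ)‖ :=
        norm_sub_le _ _
    _ ≤ 1 + 1 := by
        apply add_le_add _ hdiv
        split <;> simp
    _ = 2 := by norm_num

end NSAux

open NSAux in
/-- Estimate for the Leray-projected nonlinearity:
`N_{α-1/2}(F) ≤ C N_{1/2}(a) N_{3/2+α}(a)` for divergence-free, mean-zero `a`, where `F`
consists of the Fourier coefficients of `𝒫 ∇·(u ⊗ u)`. -/
theorem Ns_leray_nonlinearity_alpha (α : ℝ) (hα0 : 0 ≤ α) (hα1 : α < 1) :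
    ∃ C : ℝ, 0 < C ∧ ∀ a : (Fin 3 → ℤ) → EuclideanSpace ℂ (Fin 3),
      a 0 = 0 →
      (∀ n : Fin 3 → ℤ, ∑ j, (n j : ℂ) * a n j = 0) →
      Ns (3 / 2 + α) a < ⊤ →
      ∀ F : (Fin 3 → ℤ) → EuclideanSpace ℂ (Fin 3),
        F 0 = 0 →
        (∀ n : Fin 3 → ℤ, n ≠ 0 → ∀ j : Fin 3, F n j =
          ∑ k, (((if j = k then 1 else 0) : ℂ) -
              (n j : ℂ) * (n k : ℂ) / ((∑ i, (n i) ^ 2 : ℤ) : ℂ)) *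
            ∑ m, Complex.I * (n m : ℂ) *
              conv (fun p => a p m) (fun p => a p k) n) →
        Ns (α - 1 / 2) F ≤ ENNReal.ofReal C * Ns (1 / 2 : ℝ) a * Ns (3 / 2 + α) a := by
  refine ⟨161243136, by norm_num, ?_⟩
  intro a _ _ _ F hF0 hFr
  set hh : G → ℝ≥0∞ := fun p => ((‖a p‖₊ : ℝ≥0∞)) with hhd
  set Cn : G → ℝ≥0∞ := fun n => ∑' p : G, hh p * hh (n - p) with hCd
  have coe2 : ∀ (z:ℂ), ‖z‖ ≤ 2 → ((‖z‖₊:ℝ≥0∞)) ≤ 2 := by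
    intro z hz
    have h1 : ‖z‖₊ ≤ (2:ℝ≥0) := by exact_mod_cast hz
    exact_mod_cast ENNReal.coe_le_coe.mpr h1
  -- pointwise bound on F
  have key : ∀ n : G, w n ^ (α - 1/2) * ((‖F n‖₊:ℝ≥0∞))^2
      ≤ 2916 * (w n ^ (α + 1/2) * Cn n ^ 2) := by
    intro n
    by_cases hn : n = 0
    · subst hn
      rw [hF0]
      simp
    · -- conv bound
      have hconv : ∀ (mi k : Fin 3),
          ((‖conv (fun p => a p mi) (fun p => a p k) n‖₊ : ℝ≥0∞)) ≤ Cn n := by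
        intro mi k
        refine (enorm_tsum_le' _).trans ?_
        apply ENNReal.tsum_le_tsum
        intro p
        rw [nnnorm_mul, ENNReal.coe_mul]
        have h1 : ((‖a p mi‖₊:ℝ≥0∞)) ≤ hh p := by
          show ((‖a p mi‖₊:ℝ≥0∞)) ≤ ((‖a p‖₊:ℝ≥0∞))
          exact ENNReal.coe_le_coe.mpr (by exact_mod_cast coord_le (a p) mi)
        have h2 : ((‖a (n-p) k‖₊:ℝ≥0∞)) ≤ hh (n-p) := by
          show ((‖a (n-p) k‖₊:ℝ≥0∞)) ≤ ((‖a (n-p)‖₊:ℝ≥0∞))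
          exact ENNReal.coe_le_coe.mpr (by exact_mod_cast coord_le (a (n-p)) k)
        exact mul_le_mul' h1 h2
      -- frequency factor bound
      have hnm : ∀ mi : Fin 3, ((‖((n mi : ℂ))‖₊ : ℝ≥0∞)) ≤ w n ^ ((1:ℝ)/2) := by
        intro mi
        apply le_rpow_half
        have hre : ((‖((n mi:ℂ))‖₊ : ℝ≥0∞))^2 = ENNReal.ofReal (((n mi:ℝ))^2) := by
          rw [← enorm_eq_nnnorm, ← ofReal_norm, ← ENNReal.ofReal_pow (norm_nonneg _)]
          congr 1
          rw [Complex.norm_intCast]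
          rw [sq_abs]
        rw [hre, w]
        apply ENNReal.ofReal_le_ofReal
        have h1 : ((n mi:ℝ))^2 ≤ (q n : ℝ) := by
          rw [qcast]
          exact Finset.single_le_sum (f := fun i => ((n i:ℝ))^2) (fun i _ => sq_nonneg _)
            (Finset.mem_univ mi)
        linarith
      -- inner sum bound
      have hXk : ∀ k : Fin 3,
          ((‖∑ m, Complex.I * (n m:ℂ) * conv (fun p => a p m) (fun p => a p k) n‖₊ : ℝ≥0∞))
            ≤ 3 * (w n ^ ((1:ℝ)/2) * Cn n) := by
        intro k
        calc ((‖∑ m, Complex.I * (n m:ℂ) * conv (fun p => a p m) (fun p => a p k) n‖₊ : ℝ≥0∞))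
            ≤ ∑ m : Fin 3, ((‖Complex.I * (n m:ℂ) * conv (fun p => a p m) (fun p => a p k) n‖₊ : ℝ≥0∞)) := by
              exact_mod_cast nnnorm_sum_le Finset.univ
                (fun m => Complex.I * (n m:ℂ) * conv (fun p => a p m) (fun p => a p k) n)
          _ ≤ ∑ _m : Fin 3, (w n ^ ((1:ℝ)/2) * Cn n) := by
              apply Finset.sum_le_sum
              intro m _
              rw [nnnorm_mul, nnnorm_mul, Complex.nnnorm_I, one_mul, ENNReal.coe_mul]
              exact mul_le_mul' (hnm m) (hconv m k)
          _ = 3 * (w n ^ ((1:ℝ)/2) * Cn n) := by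
              rw [Finset.sum_const, Finset.card_univ, Fintype.card_fin, nsmul_eq_mul]
              norm_num
      -- component bound
      have hFj : ∀ j : Fin 3, ((‖F n j‖₊ : ℝ≥0∞)) ≤ 18 * (w n ^ ((1:ℝ)/2) * Cn n) := by
        intro j
        rw [hFr n hn j]
        calc ((‖∑ k, (((if j = k then 1 else 0) : ℂ) -
                (n j : ℂ) * (n k : ℂ) / ((∑ i, (n i) ^ 2 : ℤ) : ℂ)) *
              ∑ m, Complex.I * (n m : ℂ) * conv (fun p => a p m) (fun p => a p k) n‖₊ : ℝ≥0∞))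
            ≤ ∑ k : Fin 3, ((‖(((if j = k then 1 else 0) : ℂ) -
                (n j : ℂ) * (n k : ℂ) / ((∑ i, (n i) ^ 2 : ℤ) : ℂ)) *
              ∑ m, Complex.I * (n m : ℂ) * conv (fun p => a p m) (fun p => a p k) n‖₊ : ℝ≥0∞)) := by
              exact_mod_cast nnnorm_sum_le Finset.univ _
          _ ≤ ∑ _k : Fin 3, 2 * (3 * (w n ^ ((1:ℝ)/2) * Cn n)) := by
              apply Finset.sum_le_sum
              intro k _
              rw [nnnorm_mul, ENNReal.coe_mul]
              apply mul_le_mul' (coe2 _ (coeff_bound n hn j k)) (hXk k)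
          _ = 18 * (w n ^ ((1:ℝ)/2) * Cn n) := by
              rw [Finset.sum_const, Finset.card_univ, Fintype.card_fin, nsmul_eq_mul]
              ring
      -- whole vector bound
      have hFn2 : ((‖F n‖₊ : ℝ≥0∞)) ≤ 54 * (w n ^ ((1:ℝ)/2) * Cn n) := by
        have h0 : ((‖F n‖₊ : ℝ≥0∞)) ≤ ∑ j : Fin 3, ((‖F n j‖₊ : ℝ≥0∞)) := by
          have h1 : ‖F n‖₊ ≤ ∑ j : Fin 3, ‖F n j‖₊ := by
            exact_mod_cast norm_le_sum_coord (F n)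
          exact_mod_cast ENNReal.coe_le_coe.mpr h1
        refine h0.trans ?_
        calc ∑ j : Fin 3, ((‖F n j‖₊ : ℝ≥0∞)) ≤ ∑ _j : Fin 3, 18 * (w n ^ ((1:ℝ)/2) * Cn n) :=
              Finset.sum_le_sum (fun j _ => hFj j)
          _ = 54 * (w n ^ ((1:ℝ)/2) * Cn n) := by
              rw [Finset.sum_const, Finset.card_univ, Fintype.card_fin, nsmul_eq_mul]
              ring
      -- combine
      have hu2 : (w n ^ ((1:ℝ)/2))^2 = w n ^ (1:ℝ) := by
        rw [← rpow_two', ← ENNReal.rpow_mul]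
        norm_num
      have hws : w n ^ (α-1/2) * w n ^ (1:ℝ) = w n ^ (α+1/2) := by
        rw [← ENNReal.rpow_add _ _ (w_ne_zero n) (w_ne_top n),
          show α-1/2+1 = α+1/2 by ring]
      calc w n ^ (α - 1/2) * ((‖F n‖₊:ℝ≥0∞))^2
          ≤ w n ^ (α - 1/2) * (54 * (w n ^ ((1:ℝ)/2) * Cn n))^2 :=
            mul_le_mul_right (pow_le_pow_left₀ zero_le hFn2 2) _
        _ = 2916 * (w n ^ (α + 1/2) * Cn n ^ 2) := by
            rw [mul_pow, mul_pow, hu2]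
            rw [show ((54:ℝ≥0∞))^2 = 2916 by norm_num]
            rw [← hws]
            ring
  -- sum up and apply the core estimate
  have hsum : ∑' n : G, w n ^ (α - 1/2) * ((‖F n‖₊:ℝ≥0∞))^2
      ≤ 161243136^2 * ((∑' n : G, w n ^ ((1:ℝ)/2) * hh n ^ 2)
          * (∑' n : G, w n ^ (3/2 + α) * hh n ^ 2)) := by
    have hcore := core (s := α + 1/2) (by linarith) (by linarith) hh
    have hBeq : (∑' n : G, w n ^ (α + 1/2 + 1) * hh n ^ 2)
        = ∑' n : G, w n ^ (3/2 + α) * hh n ^ 2 := by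
      apply tsum_congr
      intro n
      rw [show α + 1/2 + 1 = 3/2 + α by ring]
    rw [hBeq] at hcore
    calc ∑' n : G, w n ^ (α - 1/2) * ((‖F n‖₊:ℝ≥0∞))^2
        ≤ ∑' n : G, 2916 * (w n ^ (α + 1/2) * Cn n ^ 2) := ENNReal.tsum_le_tsum key
      _ = 2916 * ∑' n : G, w n ^ (α + 1/2) * Cn n ^ 2 := ENNReal.tsum_mul_left
      _ ≤ 2916 * (55296 * ((∑' n : G, w n ^ ((1:ℝ)/2) * hh n ^ 2)
            * (∑' n : G, w n ^ (3/2 + α) * hh n ^ 2))) := mul_le_mul_right hcore _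
      _ ≤ 161243136^2 * ((∑' n : G, w n ^ ((1:ℝ)/2) * hh n ^ 2)
            * (∑' n : G, w n ^ (3/2 + α) * hh n ^ 2)) := by
          rw [← mul_assoc, ← mul_assoc, mul_assoc]
          exact mul_le_mul_left (by norm_num) _
  -- conclude
  rw [Ns_eq, Ns_eq, Ns_eq]
  have hmono := ENNReal.rpow_le_rpow hsum (by norm_num : (0:ℝ) ≤ 1/2)
  refine hmono.trans ?_
  rw [ENNReal.mul_rpow_of_nonneg _ _ (by norm_num : (0:ℝ) ≤ 1/2),
    ENNReal.mul_rpow_of_nonneg _ _ (by norm_num : (0:ℝ) ≤ 1/2)]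
  rw [← mul_assoc]
  apply mul_le_mul_left
  apply mul_le_mul_left
  have h1 : ((161243136:ℝ≥0∞)^2) ^ ((1:ℝ)/2) = 161243136 := by
    rw [← rpow_two', ← ENNReal.rpow_mul]
    norm_num
  rw [h1]
  apply le_of_eq
  rw [show (161243136:ℝ) = ((161243136:ℕ):ℝ) by norm_num, ENNReal.ofReal_natCast]
  norm_num
end
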